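/- arXiv:1703.09633 — 3 statements merged into one kernel-verified Lean document; each statement's English description precedes it below -/
import Mathlib

section
/- For every positive integer k and every z in the upper half-plane, the image of G(z,−2k) under the ξ-operator of weight −2k equals (−1)^{k+1}·2^{2k+2}·π times the classical weight 2k+2 Eisenstein series: 2i·y^{−2k}·conjugate( (1/2)(∂/∂x + i·∂/∂y) G(z,−2k) ) = (−1)^{k+1}·2^{2k+2}·π·( (1/2)ζ(−2k−1) + Σ_{n≥1} σ_{2k+1}(n) q^n ). -/
open scoped Real BigOperators
open MeasureTheory

/-- The incomplete Gamma function `Γ(s, x) = ∫_x^∞ t^(s-1) e^(-t) dt`. -/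
noncomputable def incGamma (s x : ℝ) : ℝ := ∫ t in Set.Ioi x, t ^ (s - 1) * Real.exp (-t)

/-- The divisor power sum `σ_m(n) = Σ_{d ∣ n} d^m`. -/
def sigma' (m n : ℕ) : ℕ := ∑ d ∈ n.divisors, d ^ m

/-- The harmonic Maass Eisenstein series `G(z, -2k)`. -/
noncomputable def G (k : ℕ) (z : ℂ) : ℂ :=
  ((2 * k).factorial * riemannZeta (2 * (k : ℂ) + 1)) / (2 * Real.pi) ^ (2 * k)
  + (-1 : ℂ) ^ (k + 1) * (z.im : ℂ) ^ (1 + 2 * k) * 2 ^ (1 + 2 * k) * (Real.pi : ℂ) *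
      riemannZeta (-2 * (k : ℂ) - 1) / (2 * (k : ℂ) + 1)
  + (-1 : ℂ) ^ k / (2 * Real.pi) ^ (2 * k) * (2 * k).factorial *
      ∑' n : ℕ+, ((sigma' (2 * k + 1) n : ℂ)) / ((n : ℕ) : ℂ) ^ (2 * k + 1) *
        Complex.exp (2 * Real.pi * Complex.I * ((n : ℕ) : ℂ) * z)
  + (-1 : ℂ) ^ k / (2 * Real.pi) ^ (2 * k) *
      ∑' n : ℕ+, ((sigma' (2 * k + 1) n : ℂ)) / ((n : ℕ) : ℂ) ^ (2 * k + 1) *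
        ((incGamma (1 + 2 * k) (4 * Real.pi * (n : ℕ) * z.im) : ℝ) : ℂ) *
        Complex.exp (-(2 * Real.pi * Complex.I * ((n : ℕ) : ℂ) * z))

/-- Partial derivative in the real direction `x` of a function on `ℂ ≃ ℝ²`. -/
noncomputable def dZx (f : ℂ → ℂ) (z : ℂ) : ℂ :=
  deriv (fun t : ℝ => f (t + z.im * Complex.I)) z.re

/-- Partial derivative in the imaginary direction `y` of a function on `ℂ ≃ ℝ²`. -/
noncomputable def dZy (f : ℂ → ℂ) (z : ℂ) : ℂ :=
  deriv (fun t : ℝ => f (z.re + t * Complex.I)) z.im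

namespace XiAux

open Complex Set Filter

/-! ### incomplete Gamma basics -/

lemma incGamma_eq (k : ℕ) (x : ℝ) :
    incGamma (1 + 2 * k) x = ∫ t in Set.Ioi x, t ^ (2 * k) * Real.exp (-t) := by
  have h : ∀ t : ℝ, t ^ ((1 + 2 * (k : ℝ)) - 1) = t ^ (2 * k) := fun t => by
    rw [show (1 + 2 * (k : ℝ)) - 1 = ((2 * k : ℕ) : ℝ) by push_cast; ring, Real.rpow_natCast]
  simp_rw [incGamma, h]

lemma continuous_phi (k : ℕ) : Continuous (fun t : ℝ => t ^ (2 * k) * Real.exp (-t)) := by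
  fun_prop

lemma integrableOn_phi (k : ℕ) {x : ℝ} (hx : 0 ≤ x) :
    IntegrableOn (fun t : ℝ => t ^ (2 * k) * Real.exp (-t)) (Set.Ioi x) := by
  have h := Real.GammaIntegral_convergent (s := 1 + 2 * (k : ℝ)) (by positivity)
  have h2 : IntegrableOn (fun t : ℝ => t ^ (2 * k) * Real.exp (-t)) (Set.Ioi 0) := by
    refine h.congr_fun ?_ measurableSet_Ioi
    intro t ht
    show Real.exp (-t) * t ^ ((1 + 2 * (k:ℝ)) - 1) = t ^ (2 * k) * Real.exp (-t)
    rw [show (1 + 2 * (k : ℝ)) - 1 = ((2 * k : ℕ) : ℝ) by push_cast; ring, Real.rpow_natCast]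
    ring
  exact h2.mono_set (Set.Ioi_subset_Ioi hx)

lemma incGamma_nonneg (k : ℕ) {x : ℝ} (hx : 0 ≤ x) : 0 ≤ incGamma (1 + 2 * k) x := by
  rw [incGamma_eq]
  apply setIntegral_nonneg measurableSet_Ioi
  intro t ht
  have h0 : (0 : ℝ) ≤ t := le_trans hx (le_of_lt ht)
  positivity

lemma pointwise_bound (k : ℕ) {t : ℝ} (ht : 0 ≤ t) :
    t ^ (2 * k) * Real.exp (-t)
      ≤ ((2 * k).factorial * 4 ^ (2 * k) : ℝ) * Real.exp (-(3 / 4 * t)) := by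
  have h1 : t ^ (2 * k) ≤ ((2 * k).factorial * 4 ^ (2 * k) : ℝ) * Real.exp (t / 4) := by
    have h := Real.pow_div_factorial_le_exp (x := t / 4) (by positivity) (2 * k)
    rw [div_le_iff₀ (by positivity)] at h
    calc t ^ (2 * k) = (t / 4) ^ (2 * k) * 4 ^ (2 * k) := by
          rw [div_pow, div_mul_cancel₀]
          positivity
      _ ≤ (Real.exp (t / 4) * ((2 * k).factorial : ℝ)) * 4 ^ (2 * k) := by
          gcongr
      _ = ((2 * k).factorial * 4 ^ (2 * k) : ℝ) * Real.exp (t / 4) := by ring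
  calc t ^ (2 * k) * Real.exp (-t)
      ≤ (((2 * k).factorial * 4 ^ (2 * k) : ℝ) * Real.exp (t / 4)) * Real.exp (-t) := by
        gcongr
    _ = ((2 * k).factorial * 4 ^ (2 * k) : ℝ) * Real.exp (-(3 / 4 * t)) := by
        rw [mul_assoc, ← Real.exp_add]
        congr 2
        ring

lemma incGamma_le (k : ℕ) {x : ℝ} (hx : 0 ≤ x) :
    incGamma (1 + 2 * k) x
      ≤ ((2 * k).factorial * 4 ^ (2 * k) * (4 / 3) : ℝ) * Real.exp (-(3 / 4 * x)) := by
  rw [incGamma_eq]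
  have hint : IntegrableOn
      (fun t : ℝ => ((2 * k).factorial * 4 ^ (2 * k) : ℝ) * Real.exp (-(3 / 4 : ℝ) * t))
      (Set.Ioi x) := (exp_neg_integrableOn_Ioi x (by norm_num : (0:ℝ) < 3/4)).const_mul _
  have h1 : (∫ t in Set.Ioi x, t ^ (2 * k) * Real.exp (-t))
      ≤ ∫ t in Set.Ioi x, ((2 * k).factorial * 4 ^ (2 * k) : ℝ) * Real.exp (-(3 / 4 : ℝ) * t) := by
    apply setIntegral_mono_on (integrableOn_phi k hx) hint measurableSet_Ioi
    intro t ht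
    have h := pointwise_bound k (le_trans hx ht.le)
    calc t ^ (2 * k) * Real.exp (-t) ≤ ((2 * k).factorial * 4 ^ (2 * k) : ℝ)
          * Real.exp (-(3 / 4 * t)) := h
      _ = ((2 * k).factorial * 4 ^ (2 * k) : ℝ) * Real.exp (-(3 / 4 : ℝ) * t) := by
          rw [neg_mul]
  have h2 : (∫ t in Set.Ioi x, Real.exp (-(3 / 4 : ℝ) * t))
      = (3 / 4 : ℝ)⁻¹ * Real.exp (-(3 / 4 * x)) := by
    have h := integral_comp_mul_left_Ioi (fun u : ℝ => Real.exp (-u)) x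
      (by norm_num : (0:ℝ) < 3/4)
    simp only [smul_eq_mul] at h
    have h' : (∫ t in Set.Ioi x, Real.exp (-(3 / 4 * t)))
        = (3 / 4 : ℝ)⁻¹ * ∫ u in Set.Ioi (3 / 4 * x), Real.exp (-u) := h
    rw [integral_exp_neg_Ioi] at h'
    calc (∫ t in Set.Ioi x, Real.exp (-(3 / 4 : ℝ) * t))
        = ∫ t in Set.Ioi x, Real.exp (-(3 / 4 * t)) := by
          congr 1 with t; rw [neg_mul]
      _ = (3 / 4 : ℝ)⁻¹ * Real.exp (-(3 / 4 * x)) := h'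
  calc (∫ t in Set.Ioi x, t ^ (2 * k) * Real.exp (-t))
      ≤ ∫ t in Set.Ioi x, ((2 * k).factorial * 4 ^ (2 * k) : ℝ)
          * Real.exp (-(3 / 4 : ℝ) * t) := h1
    _ = ((2 * k).factorial * 4 ^ (2 * k) : ℝ) * ∫ t in Set.Ioi x, Real.exp (-(3 / 4 : ℝ) * t) := by
        rw [MeasureTheory.integral_const_mul]
    _ = ((2 * k).factorial * 4 ^ (2 * k) * (4 / 3) : ℝ) * Real.exp (-(3 / 4 * x)) := by
        rw [h2]; ring

lemma hasDerivAt_incGamma (k : ℕ) {x : ℝ} (hx : 0 < x) :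
    HasDerivAt (fun u => incGamma (1 + 2 * k) u) (-(x ^ (2 * k) * Real.exp (-x))) x := by
  set φ : ℝ → ℝ := fun t => t ^ (2 * k) * Real.exp (-t) with hφ
  have hc : Continuous φ := continuous_phi k
  have hb0 : (0:ℝ) ≤ x / 2 := by positivity
  have hbx : x / 2 < x := by linarith
  have key : ∀ u ∈ Set.Ioi (x / 2),
      incGamma (1 + 2 * k) u = incGamma (1 + 2 * k) (x / 2) - ∫ t in (x/2)..u, φ t := by
    intro u hu
    have hbu : x / 2 ≤ u := le_of_lt hu
    have hsplit : (∫ t in Set.Ioi (x/2), φ t)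
        = (∫ t in Set.Ioc (x/2) u, φ t) + ∫ t in Set.Ioi u, φ t := by
      rw [← setIntegral_union (Set.Ioc_disjoint_Ioi le_rfl) measurableSet_Ioi
        ((integrableOn_phi k hb0).mono_set Set.Ioc_subset_Ioi_self)
        (integrableOn_phi k (hb0.trans hbu)), Set.Ioc_union_Ioi_eq_Ioi hbu]
    rw [incGamma_eq, incGamma_eq, intervalIntegral.integral_of_le hbu]
    have : (∫ t in Set.Ioi u, φ t)
        = (∫ t in Set.Ioi (x/2), φ t) - ∫ t in Set.Ioc (x/2) u, φ t := by
      rw [hsplit]; ring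
    exact this
  have hder : HasDerivAt (fun u => incGamma (1 + 2 * k) (x/2) - ∫ t in (x/2)..u, φ t)
      (-(φ x)) x := by
    have h := intervalIntegral.integral_hasDerivAt_right
      (hc.intervalIntegrable (x/2) x)
      (hc.stronglyMeasurableAtFilter _ _)
      hc.continuousAt
    simpa using h.const_sub (incGamma (1 + 2 * k) (x/2))
  exact hder.congr_of_eventuallyEq (Filter.eventuallyEq_of_mem (Ioi_mem_nhds hbx) key)

lemma hasDerivAt_incGamma_scaled (k : ℕ) {c t : ℝ} (hc : 0 < c) (ht : 0 < t) :
    HasDerivAt (fun u : ℝ => incGamma (1 + 2 * k) (c * u))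
      (-((c * t) ^ (2 * k) * Real.exp (-(c * t)) * c)) t := by
  have h1 := hasDerivAt_incGamma k (x := c * t) (by positivity)
  have h2 : HasDerivAt (fun u : ℝ => c * u) c t := by
    simpa using (hasDerivAt_id t).const_mul c
  have h := h1.comp t h2
  simpa [neg_mul, Function.comp_def] using h

end XiAux

namespace XiAux
open Complex Set Filter

/-! ### coefficients and series terms -/

noncomputable def Acoef (k : ℕ) (n : ℕ+) : ℂ :=
  ((sigma' (2 * k + 1) n : ℂ)) / ((n : ℕ) : ℂ) ^ (2 * k + 1)

noncomputable def f3 (k : ℕ) (n : ℕ+) (z : ℂ) : ℂ :=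
  Acoef k n * Complex.exp (2 * Real.pi * Complex.I * ((n : ℕ) : ℂ) * z)

noncomputable def f4 (k : ℕ) (n : ℕ+) (z : ℂ) : ℂ :=
  Acoef k n * ((incGamma (1 + 2 * k) (4 * Real.pi * (n : ℕ) * z.im) : ℝ) : ℂ) *
    Complex.exp (-(2 * Real.pi * Complex.I * ((n : ℕ) : ℂ) * z))

lemma sigma'_le (m n : ℕ) : sigma' m n ≤ n ^ (m + 1) := by
  unfold sigma'
  calc ∑ d ∈ n.divisors, d ^ m ≤ ∑ _d ∈ n.divisors, n ^ m :=
        Finset.sum_le_sum fun d hd => Nat.pow_le_pow_left (Nat.divisor_le hd) m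
    _ = n.divisors.card * n ^ m := by rw [Finset.sum_const, smul_eq_mul]
    _ ≤ n * n ^ m := by
        gcongr
        have hsub : n.divisors ⊆ Finset.Ico 1 (n + 1) := by
          intro d hd
          exact Finset.mem_Ico.mpr ⟨(Nat.pos_of_mem_divisors hd),
            Nat.lt_succ_of_le (Nat.divisor_le hd)⟩
        calc n.divisors.card ≤ (Finset.Ico 1 (n + 1)).card := Finset.card_le_card hsub
          _ = n := by simp
    _ = n ^ (m + 1) := by ring

lemma normA_le (k : ℕ) (n : ℕ+) : ‖Acoef k n‖ ≤ ((n : ℕ) : ℝ) := by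
  have hn : (0:ℝ) < ((n:ℕ) : ℝ) := by exact_mod_cast n.pos
  rw [Acoef, norm_div, norm_pow, Complex.norm_natCast, Complex.norm_natCast,
    div_le_iff₀ (by positivity)]
  calc (sigma' (2 * k + 1) (n:ℕ) : ℝ) ≤ ((n:ℕ) : ℝ) ^ (2 * k + 1 + 1) := by
        exact_mod_cast sigma'_le (2 * k + 1) (n:ℕ)
    _ = ((n:ℕ):ℝ) * ((n:ℕ):ℝ) ^ (2 * k + 1) := by ring

lemma summable_pow_exp (p : ℕ) {c : ℝ} (hc : 0 < c) :
    Summable (fun n : ℕ+ => ((n:ℕ):ℝ) ^ p * Real.exp (-c * (n:ℕ))) := by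
  have h : Summable (fun n : ℕ => (n:ℝ) ^ p * Real.exp (-c) ^ n) :=
    summable_pow_mul_geometric_of_norm_lt_one p (by
      rw [Real.norm_eq_abs, abs_of_pos (Real.exp_pos _)]
      exact Real.exp_lt_one_iff.mpr (by linarith))
  have h2 : Summable (fun n : ℕ => (n:ℝ) ^ p * Real.exp (-c * n)) := by
    refine h.congr fun n => ?_
    have harg : (n:ℝ) * -c = -c * n := by ring
    rw [← Real.exp_nat_mul, harg]
  exact h2.comp_injective PNat.coe_injective

/-! ### complex exponential helpers -/

lemma hasDerivAt_cexp_lin (a c : ℂ) (x : ℝ) :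
    HasDerivAt (fun t : ℝ => Complex.exp (a * t + c)) (a * Complex.exp (a * x + c)) x := by
  have h := (((hasDerivAt_id (x:ℂ)).const_mul a).add_const c).cexp.comp_ofReal
  simp only [id_eq, mul_one] at h
  convert h using 1
  ring

lemma norm_cexp_bI (b c t : ℝ) :
    ‖Complex.exp ((b : ℂ) * Complex.I * (t : ℂ) + (c : ℂ))‖ = Real.exp c := by
  rw [Complex.norm_exp]
  congr 1
  simp

lemma norm_cexp_b (b c t : ℝ) :
    ‖Complex.exp ((b : ℂ) * (t : ℂ) + (c : ℂ) * Complex.I)‖ = Real.exp (b * t) := by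
  rw [Complex.norm_exp]
  congr 1
  simp

/-! ### exponent rewrites -/

lemma arg3 (n : ℕ+) (y s : ℝ) :
    2 * (Real.pi : ℂ) * Complex.I * ((n : ℕ) : ℂ) * ((s : ℂ) + (y : ℂ) * Complex.I)
      = ((2 * Real.pi * ((n:ℕ):ℝ) : ℝ) : ℂ) * Complex.I * (s : ℂ)
        + ((-(2 * Real.pi * ((n:ℕ):ℝ) * y) : ℝ) : ℂ) := by
  push_cast
  linear_combination (2 * (Real.pi : ℂ) * ((n:ℕ):ℂ) * (y:ℂ)) * Complex.I_sq

lemma arg3' (n : ℕ+) (x s : ℝ) :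
    2 * (Real.pi : ℂ) * Complex.I * ((n : ℕ) : ℂ) * ((x : ℂ) + (s : ℂ) * Complex.I)
      = ((-(2 * Real.pi * ((n:ℕ):ℝ)) : ℝ) : ℂ) * (s : ℂ)
        + ((2 * Real.pi * ((n:ℕ):ℝ) * x : ℝ) : ℂ) * Complex.I := by
  push_cast
  linear_combination (2 * (Real.pi : ℂ) * ((n:ℕ):ℂ) * (s:ℂ)) * Complex.I_sq

lemma arg4 (n : ℕ+) (y s : ℝ) :
    -(2 * (Real.pi : ℂ) * Complex.I * ((n : ℕ) : ℂ) * ((s : ℂ) + (y : ℂ) * Complex.I))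
      = ((-(2 * Real.pi * ((n:ℕ):ℝ)) : ℝ) : ℂ) * Complex.I * (s : ℂ)
        + ((2 * Real.pi * ((n:ℕ):ℝ) * y : ℝ) : ℂ) := by
  push_cast
  linear_combination (-2 * (Real.pi : ℂ) * ((n:ℕ):ℂ) * (y:ℂ)) * Complex.I_sq

lemma arg4' (n : ℕ+) (x s : ℝ) :
    -(2 * (Real.pi : ℂ) * Complex.I * ((n : ℕ) : ℂ) * ((x : ℂ) + (s : ℂ) * Complex.I))
      = ((2 * Real.pi * ((n:ℕ):ℝ) : ℝ) : ℂ) * (s : ℂ)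
        + ((-(2 * Real.pi * ((n:ℕ):ℝ) * x) : ℝ) : ℂ) * Complex.I := by
  push_cast
  linear_combination (-2 * (Real.pi : ℂ) * ((n:ℕ):ℂ) * (s:ℂ)) * Complex.I_sq

lemma im_aux (s y : ℝ) : ((s : ℂ) + (y : ℂ) * Complex.I).im = y := by simp

lemma im_aux' (x s : ℝ) : ((x : ℂ) + (s : ℂ) * Complex.I).im = s := by simp

end XiAux

namespace XiAux
open Complex Set Filter

lemma norm_coeff (n : ℕ+) :
    ‖2 * (Real.pi : ℂ) * Complex.I * ((n : ℕ) : ℂ)‖ = 2 * Real.pi * ((n:ℕ):ℝ) := by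
  have h2 : ‖(2:ℂ)‖ = 2 := by norm_num
  rw [norm_mul, norm_mul, norm_mul, h2, Complex.norm_I, Complex.norm_natCast,
    Complex.norm_real, Real.norm_eq_abs, _root_.abs_of_nonneg Real.pi_pos.le]
  ring

lemma norm_f3' (k : ℕ) (n : ℕ+) (y t : ℝ) :
    ‖f3 k n ((t : ℂ) + (y : ℂ) * Complex.I)‖
      = ‖Acoef k n‖ * Real.exp (-(2 * Real.pi * ((n:ℕ):ℝ) * y)) := by
  rw [f3, norm_mul, arg3, norm_cexp_bI]

lemma norm_f3'' (k : ℕ) (n : ℕ+) (x t : ℝ) :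
    ‖f3 k n ((x : ℂ) + (t : ℂ) * Complex.I)‖
      = ‖Acoef k n‖ * Real.exp (-(2 * Real.pi * ((n:ℕ):ℝ)) * t) := by
  rw [f3, norm_mul, arg3', norm_cexp_b]

lemma norm_f4' (k : ℕ) (n : ℕ+) {y : ℝ} (hy : 0 ≤ y) (t : ℝ) :
    ‖f4 k n ((t : ℂ) + (y : ℂ) * Complex.I)‖
      = ‖Acoef k n‖ * incGamma (1 + 2 * k) (4 * Real.pi * (n:ℕ) * y)
          * Real.exp (2 * Real.pi * ((n:ℕ):ℝ) * y) := by
  rw [f4, im_aux, norm_mul, norm_mul, arg4, norm_cexp_bI, Complex.norm_real,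
    Real.norm_eq_abs, _root_.abs_of_nonneg (incGamma_nonneg k (by positivity))]

/-! ### per-term derivatives -/

lemma hasDerivAt_f3x (k : ℕ) (n : ℕ+) (y t : ℝ) :
    HasDerivAt (fun s : ℝ => f3 k n ((s : ℂ) + (y : ℂ) * Complex.I))
      (2 * (Real.pi:ℂ) * Complex.I * ((n:ℕ):ℂ) * f3 k n ((t : ℂ) + (y : ℂ) * Complex.I)) t := by
  have h := (hasDerivAt_cexp_lin (((2 * Real.pi * ((n:ℕ):ℝ) : ℝ) : ℂ) * Complex.I)
      ((-(2 * Real.pi * ((n:ℕ):ℝ) * y) : ℝ) : ℂ) t).const_mul (Acoef k n)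
  have hfun : (fun s : ℝ => f3 k n ((s : ℂ) + (y : ℂ) * Complex.I))
      = fun s : ℝ => Acoef k n * Complex.exp
          ((((2 * Real.pi * ((n:ℕ):ℝ) : ℝ) : ℂ) * Complex.I) * (s:ℂ)
            + ((-(2 * Real.pi * ((n:ℕ):ℝ) * y) : ℝ) : ℂ)) := by
    funext s
    rw [f3, arg3]
  rw [hfun]
  refine h.congr_deriv ?_
  rw [f3, arg3]
  push_cast
  ring

lemma hasDerivAt_f3y (k : ℕ) (n : ℕ+) (x t : ℝ) :
    HasDerivAt (fun s : ℝ => f3 k n ((x : ℂ) + (s : ℂ) * Complex.I))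
      (((-(2 * Real.pi * ((n:ℕ):ℝ)) : ℝ) : ℂ) * f3 k n ((x : ℂ) + (t : ℂ) * Complex.I)) t := by
  have h := (hasDerivAt_cexp_lin (((-(2 * Real.pi * ((n:ℕ):ℝ)) : ℝ) : ℂ))
      (((2 * Real.pi * ((n:ℕ):ℝ) * x : ℝ) : ℂ) * Complex.I) t).const_mul (Acoef k n)
  have hfun : (fun s : ℝ => f3 k n ((x : ℂ) + (s : ℂ) * Complex.I))
      = fun s : ℝ => Acoef k n * Complex.exp
          ((((-(2 * Real.pi * ((n:ℕ):ℝ)) : ℝ) : ℂ)) * (s:ℂ)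
            + (((2 * Real.pi * ((n:ℕ):ℝ) * x : ℝ) : ℂ) * Complex.I)) := by
    funext s
    rw [f3, arg3']
  rw [hfun]
  refine h.congr_deriv ?_
  rw [f3, arg3']
  push_cast
  ring

lemma hasDerivAt_f4x (k : ℕ) (n : ℕ+) (y t : ℝ) :
    HasDerivAt (fun s : ℝ => f4 k n ((s : ℂ) + (y : ℂ) * Complex.I))
      (-(2 * (Real.pi:ℂ) * Complex.I * ((n:ℕ):ℂ))
        * f4 k n ((t : ℂ) + (y : ℂ) * Complex.I)) t := by
  have h := (hasDerivAt_cexp_lin (((-(2 * Real.pi * ((n:ℕ):ℝ)) : ℝ) : ℂ) * Complex.I)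
      (((2 * Real.pi * ((n:ℕ):ℝ) * y) : ℝ) : ℂ) t).const_mul
      (Acoef k n * ((incGamma (1 + 2 * k) (4 * Real.pi * (n:ℕ) * y) : ℝ) : ℂ))
  have hfun : (fun s : ℝ => f4 k n ((s : ℂ) + (y : ℂ) * Complex.I))
      = fun s : ℝ => (Acoef k n * ((incGamma (1 + 2 * k) (4 * Real.pi * (n:ℕ) * y) : ℝ) : ℂ))
          * Complex.exp ((((-(2 * Real.pi * ((n:ℕ):ℝ)) : ℝ) : ℂ) * Complex.I) * (s:ℂ)
            + (((2 * Real.pi * ((n:ℕ):ℝ) * y) : ℝ) : ℂ)) := by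
    funext s
    rw [f4, im_aux, arg4]
  rw [hfun]
  refine h.congr_deriv ?_
  rw [f4, im_aux, arg4]
  push_cast
  ring

noncomputable def d4 (k : ℕ) (n : ℕ+) (x t : ℝ) : ℂ :=
  Acoef k n *
    (((-((4 * Real.pi * ((n:ℕ):ℝ) * t) ^ (2 * k)
          * Real.exp (-(4 * Real.pi * ((n:ℕ):ℝ) * t)) * (4 * Real.pi * ((n:ℕ):ℝ))) : ℝ) : ℂ) *
        Complex.exp (((2 * Real.pi * ((n:ℕ):ℝ) : ℝ) : ℂ) * (t:ℂ)
          + ((-(2 * Real.pi * ((n:ℕ):ℝ) * x) : ℝ) : ℂ) * Complex.I)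
      + ((incGamma (1 + 2 * k) (4 * Real.pi * ((n:ℕ):ℝ) * t) : ℝ) : ℂ) *
        ((((2 * Real.pi * ((n:ℕ):ℝ) : ℝ)) : ℂ) * Complex.exp
          (((2 * Real.pi * ((n:ℕ):ℝ) : ℝ) : ℂ) * (t:ℂ)
            + ((-(2 * Real.pi * ((n:ℕ):ℝ) * x) : ℝ) : ℂ) * Complex.I)))

lemma hasDerivAt_f4y (k : ℕ) (n : ℕ+) (x : ℝ) {t : ℝ} (ht : 0 < t) :
    HasDerivAt (fun s : ℝ => f4 k n ((x : ℂ) + (s : ℂ) * Complex.I)) (d4 k n x t) t := by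
  have hc : (0:ℝ) < 4 * Real.pi * ((n:ℕ):ℝ) := by
    have : (0:ℝ) < ((n:ℕ):ℝ) := by exact_mod_cast n.pos
    positivity
  have h1 : HasDerivAt (fun s : ℝ => ((incGamma (1 + 2 * k) (4 * Real.pi * ((n:ℕ):ℝ) * s) : ℝ) : ℂ))
      (((-((4 * Real.pi * ((n:ℕ):ℝ) * t) ^ (2 * k)
        * Real.exp (-(4 * Real.pi * ((n:ℕ):ℝ) * t)) * (4 * Real.pi * ((n:ℕ):ℝ))) : ℝ) : ℂ)) t :=
    (hasDerivAt_incGamma_scaled k hc ht).ofReal_comp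
  have h2 := hasDerivAt_cexp_lin (((2 * Real.pi * ((n:ℕ):ℝ) : ℝ) : ℂ))
      ((((-(2 * Real.pi * ((n:ℕ):ℝ) * x)) : ℝ) : ℂ) * Complex.I) t
  have h3 := (h1.mul h2).const_mul (Acoef k n)
  have hfun : (fun s : ℝ => f4 k n ((x : ℂ) + (s : ℂ) * Complex.I))
      = fun s : ℝ => Acoef k n
          * (((incGamma (1 + 2 * k) (4 * Real.pi * ((n:ℕ):ℝ) * s) : ℝ) : ℂ)
            * Complex.exp (((2 * Real.pi * ((n:ℕ):ℝ) : ℝ) : ℂ) * (s:ℂ)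
              + ((-(2 * Real.pi * ((n:ℕ):ℝ) * x) : ℝ) : ℂ) * Complex.I)) := by
    funext s
    rw [f4, im_aux', arg4']
    ring
  rw [hfun, d4]
  exact h3

end XiAux

namespace XiAux
open Complex Set Filter

/-! ### summability and norm bounds for the series -/

lemma norm_f3_le (k : ℕ) (n : ℕ+) (y t : ℝ) :
    ‖f3 k n ((t : ℂ) + (y : ℂ) * Complex.I)‖
      ≤ ((n:ℕ):ℝ) * Real.exp (-(2 * Real.pi * y) * ((n:ℕ):ℝ)) := by
  rw [norm_f3' k n y t,
    show -(2 * Real.pi * y) * ((n:ℕ):ℝ) = -(2 * Real.pi * ((n:ℕ):ℝ) * y) by ring]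
  exact mul_le_mul_of_nonneg_right (normA_le k n) (Real.exp_pos _).le

lemma summable_f3 (k : ℕ) {y : ℝ} (hy : 0 < y) (t : ℝ) :
    Summable (fun n : ℕ+ => f3 k n ((t : ℂ) + (y : ℂ) * Complex.I)) := by
  have hu : Summable (fun n : ℕ+ => ((n:ℕ):ℝ) ^ 1 * Real.exp (-(2 * Real.pi * y) * ((n:ℕ):ℝ))) :=
    summable_pow_exp 1 (by positivity)
  refine Summable.of_norm_bounded hu fun n => ?_
  rw [pow_one]
  exact norm_f3_le k n y t

lemma norm_f4_le (k : ℕ) (n : ℕ+) {y : ℝ} (hy : 0 < y) (t : ℝ) :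
    ‖f4 k n ((t : ℂ) + (y : ℂ) * Complex.I)‖
      ≤ ((2 * k).factorial * 4 ^ (2 * k) * (4 / 3) : ℝ)
          * (((n:ℕ):ℝ) * Real.exp (-(Real.pi * y) * ((n:ℕ):ℝ))) := by
  have hn : (0:ℝ) < ((n:ℕ):ℝ) := by exact_mod_cast n.pos
  rw [norm_f4' k n hy.le t]
  have h1 : ‖Acoef k n‖ * incGamma (1 + 2 * k) (4 * Real.pi * (n:ℕ) * y)
      ≤ ((n:ℕ):ℝ) * (((2 * k).factorial * 4 ^ (2 * k) * (4 / 3) : ℝ)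
          * Real.exp (-(3 / 4 * (4 * Real.pi * ((n:ℕ):ℝ) * y)))) :=
    mul_le_mul (normA_le k n) (incGamma_le k (by positivity))
      (incGamma_nonneg k (by positivity)) hn.le
  have h2 := mul_le_mul_of_nonneg_right h1 (Real.exp_pos (2 * Real.pi * ((n:ℕ):ℝ) * y)).le
  refine le_trans h2 (le_of_eq ?_)
  have hee : Real.exp (-(3 / 4 * (4 * Real.pi * ((n:ℕ):ℝ) * y)))
      * Real.exp (2 * Real.pi * ((n:ℕ):ℝ) * y) = Real.exp (-(Real.pi * y) * ((n:ℕ):ℝ)) := by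
    rw [← Real.exp_add]
    congr 1
    ring
  calc ((n:ℕ):ℝ) * (((2 * k).factorial * 4 ^ (2 * k) * (4 / 3) : ℝ)
        * Real.exp (-(3 / 4 * (4 * Real.pi * ((n:ℕ):ℝ) * y))))
        * Real.exp (2 * Real.pi * ((n:ℕ):ℝ) * y)
      = ((n:ℕ):ℝ) * ((2 * k).factorial * 4 ^ (2 * k) * (4 / 3) : ℝ)
        * (Real.exp (-(3 / 4 * (4 * Real.pi * ((n:ℕ):ℝ) * y)))
            * Real.exp (2 * Real.pi * ((n:ℕ):ℝ) * y)) := by ring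
    _ = ((2 * k).factorial * 4 ^ (2 * k) * (4 / 3) : ℝ)
        * (((n:ℕ):ℝ) * Real.exp (-(Real.pi * y) * ((n:ℕ):ℝ))) := by rw [hee]; ring

lemma summable_f4 (k : ℕ) {y : ℝ} (hy : 0 < y) (t : ℝ) :
    Summable (fun n : ℕ+ => f4 k n ((t : ℂ) + (y : ℂ) * Complex.I)) := by
  have hu : Summable (fun n : ℕ+ => ((2 * k).factorial * 4 ^ (2 * k) * (4 / 3) : ℝ)
      * (((n:ℕ):ℝ) ^ 1 * Real.exp (-(Real.pi * y) * ((n:ℕ):ℝ)))) :=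
    (summable_pow_exp 1 (by positivity)).mul_left _
  refine Summable.of_norm_bounded hu fun n => ?_
  rw [pow_one]
  exact norm_f4_le k n hy t

/-! ### derivatives of the series, x-direction -/

lemma hasDerivAt_S3x (k : ℕ) {y : ℝ} (hy : 0 < y) (x : ℝ) :
    HasDerivAt (fun t : ℝ => ∑' n : ℕ+, f3 k n ((t : ℂ) + (y : ℂ) * Complex.I))
      (∑' n : ℕ+, 2 * (Real.pi : ℂ) * Complex.I * ((n:ℕ):ℂ)
        * f3 k n ((x : ℂ) + (y : ℂ) * Complex.I)) x := by
  refine hasDerivAt_tsum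
    (u := fun n : ℕ+ => (2 * Real.pi) * (((n:ℕ):ℝ) ^ 2
      * Real.exp (-(2 * Real.pi * y) * ((n:ℕ):ℝ))))
    ((summable_pow_exp 2 (by positivity)).mul_left _)
    (fun n t => hasDerivAt_f3x k n y t)
    (fun n t => ?_) (summable_f3 k hy x) x
  rw [norm_mul, norm_coeff]
  have h := norm_f3_le k n y t
  calc 2 * Real.pi * ((n:ℕ):ℝ) * ‖f3 k n ((t : ℂ) + (y : ℂ) * Complex.I)‖
      ≤ 2 * Real.pi * ((n:ℕ):ℝ)
        * (((n:ℕ):ℝ) * Real.exp (-(2 * Real.pi * y) * ((n:ℕ):ℝ))) := by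
        refine mul_le_mul_of_nonneg_left h (by positivity)
    _ = 2 * Real.pi * (((n:ℕ):ℝ) ^ 2 * Real.exp (-(2 * Real.pi * y) * ((n:ℕ):ℝ))) := by ring

lemma hasDerivAt_S4x (k : ℕ) {y : ℝ} (hy : 0 < y) (x : ℝ) :
    HasDerivAt (fun t : ℝ => ∑' n : ℕ+, f4 k n ((t : ℂ) + (y : ℂ) * Complex.I))
      (∑' n : ℕ+, -(2 * (Real.pi : ℂ) * Complex.I * ((n:ℕ):ℂ))
        * f4 k n ((x : ℂ) + (y : ℂ) * Complex.I)) x := by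
  refine hasDerivAt_tsum
    (u := fun n : ℕ+ => (2 * Real.pi * ((2 * k).factorial * 4 ^ (2 * k) * (4 / 3) : ℝ))
      * (((n:ℕ):ℝ) ^ 2 * Real.exp (-(Real.pi * y) * ((n:ℕ):ℝ))))
    ((summable_pow_exp 2 (by positivity)).mul_left _)
    (fun n t => hasDerivAt_f4x k n y t)
    (fun n t => ?_) (summable_f4 k hy x) x
  rw [norm_mul, norm_neg, norm_coeff]
  have h := norm_f4_le k n hy t
  calc 2 * Real.pi * ((n:ℕ):ℝ) * ‖f4 k n ((t : ℂ) + (y : ℂ) * Complex.I)‖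
      ≤ 2 * Real.pi * ((n:ℕ):ℝ) * (((2 * k).factorial * 4 ^ (2 * k) * (4 / 3) : ℝ)
        * (((n:ℕ):ℝ) * Real.exp (-(Real.pi * y) * ((n:ℕ):ℝ)))) := by
        refine mul_le_mul_of_nonneg_left h (by positivity)
    _ = (2 * Real.pi * ((2 * k).factorial * 4 ^ (2 * k) * (4 / 3) : ℝ))
        * (((n:ℕ):ℝ) ^ 2 * Real.exp (-(Real.pi * y) * ((n:ℕ):ℝ))) := by ring

/-! ### derivatives of the series, y-direction -/

lemma hasDerivAt_S3y (k : ℕ) {y : ℝ} (hy : 0 < y) (x : ℝ) :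
    HasDerivAt (fun s : ℝ => ∑' n : ℕ+, f3 k n ((x : ℂ) + (s : ℂ) * Complex.I))
      (∑' n : ℕ+, ((-(2 * Real.pi * ((n:ℕ):ℝ)) : ℝ) : ℂ)
        * f3 k n ((x : ℂ) + (y : ℂ) * Complex.I)) y := by
  have hyy : y ∈ Set.Ioi (y / 2) := by
    simp only [Set.mem_Ioi]
    linarith
  refine hasDerivAt_tsum_of_isPreconnected
    (u := fun n : ℕ+ => (2 * Real.pi) * (((n:ℕ):ℝ) ^ 2
      * Real.exp (-(Real.pi * y) * ((n:ℕ):ℝ))))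
    ((summable_pow_exp 2 (by positivity)).mul_left _)
    isOpen_Ioi isPreconnected_Ioi
    (fun n s _ => hasDerivAt_f3y k n x s)
    (fun n s hs => ?_) hyy (summable_f3 k hy x) hyy
  have hn : (0:ℝ) < ((n:ℕ):ℝ) := by exact_mod_cast n.pos
  have hsy : y / 2 ≤ s := (Set.mem_Ioi.mp hs).le
  rw [norm_mul, Complex.norm_real, Real.norm_eq_abs, abs_neg,
    _root_.abs_of_nonneg (by positivity : (0:ℝ) ≤ 2 * Real.pi * ((n:ℕ):ℝ)), norm_f3'']
  calc 2 * Real.pi * ((n:ℕ):ℝ) * (‖Acoef k n‖ * Real.exp (-(2 * Real.pi * ((n:ℕ):ℝ)) * s))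
      ≤ 2 * Real.pi * ((n:ℕ):ℝ)
        * (((n:ℕ):ℝ) * Real.exp (-(Real.pi * y) * ((n:ℕ):ℝ))) := by
        refine mul_le_mul_of_nonneg_left
          (mul_le_mul (normA_le k n) (Real.exp_le_exp.mpr ?_) (Real.exp_pos _).le hn.le)
          (by positivity)
        have hmul := mul_le_mul_of_nonneg_left hsy
          (by positivity : (0:ℝ) ≤ 2 * Real.pi * ((n:ℕ):ℝ))
        linarith
    _ = 2 * Real.pi * (((n:ℕ):ℝ) ^ 2 * Real.exp (-(Real.pi * y) * ((n:ℕ):ℝ))) := by ring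

lemma hasDerivAt_S4y (k : ℕ) {y : ℝ} (hy : 0 < y) (x : ℝ) :
    HasDerivAt (fun s : ℝ => ∑' n : ℕ+, f4 k n ((x : ℂ) + (s : ℂ) * Complex.I))
      (∑' n : ℕ+, d4 k n x y) y := by
  have hyy : y ∈ Set.Ioi (y / 2) := by
    simp only [Set.mem_Ioi]
    linarith
  refine hasDerivAt_tsum_of_isPreconnected
    (u := fun n : ℕ+ => (4 * Real.pi * ((2 * k).factorial * 4 ^ (2 * k) : ℝ)
        + 2 * Real.pi * ((2 * k).factorial * 4 ^ (2 * k) * (4 / 3) : ℝ))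
      * (((n:ℕ):ℝ) ^ 2 * Real.exp (-(Real.pi * y / 2) * ((n:ℕ):ℝ))))
    ((summable_pow_exp 2 (by positivity)).mul_left _)
    isOpen_Ioi isPreconnected_Ioi
    (fun n s hs => hasDerivAt_f4y k n x (by
      have := Set.mem_Ioi.mp hs
      linarith))
    (fun n s hs => ?_) hyy (summable_f4 k hy x) hyy
  have hn : (0:ℝ) < ((n:ℕ):ℝ) := by exact_mod_cast n.pos
  have hsy : y / 2 ≤ s := (Set.mem_Ioi.mp hs).le
  have hs0 : (0:ℝ) < s := by linarith
  have hE : ‖Complex.exp (((2 * Real.pi * ((n:ℕ):ℝ) : ℝ) : ℂ) * (s:ℂ)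
      + ((-(2 * Real.pi * ((n:ℕ):ℝ) * x) : ℝ) : ℂ) * Complex.I)‖
      = Real.exp (2 * Real.pi * ((n:ℕ):ℝ) * s) := norm_cexp_b _ _ _
  have hT1 : ‖((-((4 * Real.pi * ((n:ℕ):ℝ) * s) ^ (2 * k)
        * Real.exp (-(4 * Real.pi * ((n:ℕ):ℝ) * s)) * (4 * Real.pi * ((n:ℕ):ℝ))) : ℝ) : ℂ)
      * Complex.exp (((2 * Real.pi * ((n:ℕ):ℝ) : ℝ) : ℂ) * (s:ℂ)
        + ((-(2 * Real.pi * ((n:ℕ):ℝ) * x) : ℝ) : ℂ) * Complex.I)‖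
      ≤ 4 * Real.pi * ((n:ℕ):ℝ) * ((2 * k).factorial * 4 ^ (2 * k) : ℝ)
        * Real.exp (-(Real.pi * y / 2) * ((n:ℕ):ℝ)) := by
    rw [norm_mul, hE, Complex.norm_real, Real.norm_eq_abs, abs_neg,
      _root_.abs_of_nonneg (by positivity)]
    have hP := pointwise_bound k (t := 4 * Real.pi * ((n:ℕ):ℝ) * s) (by positivity)
    have hee : Real.exp (-(3 / 4 * (4 * Real.pi * ((n:ℕ):ℝ) * s)))
        * Real.exp (2 * Real.pi * ((n:ℕ):ℝ) * s)
        = Real.exp (-(Real.pi * ((n:ℕ):ℝ) * s)) := by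
      rw [← Real.exp_add]
      congr 1
      ring
    calc (4 * Real.pi * ((n:ℕ):ℝ) * s) ^ (2 * k)
          * Real.exp (-(4 * Real.pi * ((n:ℕ):ℝ) * s)) * (4 * Real.pi * ((n:ℕ):ℝ))
          * Real.exp (2 * Real.pi * ((n:ℕ):ℝ) * s)
        ≤ ((2 * k).factorial * 4 ^ (2 * k) : ℝ)
            * Real.exp (-(3 / 4 * (4 * Real.pi * ((n:ℕ):ℝ) * s))) * (4 * Real.pi * ((n:ℕ):ℝ))
          * Real.exp (2 * Real.pi * ((n:ℕ):ℝ) * s) := by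
          refine mul_le_mul_of_nonneg_right
            (mul_le_mul_of_nonneg_right hP (by positivity)) (Real.exp_pos _).le
      _ = 4 * Real.pi * ((n:ℕ):ℝ) * ((2 * k).factorial * 4 ^ (2 * k) : ℝ)
          * (Real.exp (-(3 / 4 * (4 * Real.pi * ((n:ℕ):ℝ) * s)))
            * Real.exp (2 * Real.pi * ((n:ℕ):ℝ) * s)) := by ring
      _ = 4 * Real.pi * ((n:ℕ):ℝ) * ((2 * k).factorial * 4 ^ (2 * k) : ℝ)
          * Real.exp (-(Real.pi * ((n:ℕ):ℝ) * s)) := by rw [hee]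
      _ ≤ 4 * Real.pi * ((n:ℕ):ℝ) * ((2 * k).factorial * 4 ^ (2 * k) : ℝ)
          * Real.exp (-(Real.pi * y / 2) * ((n:ℕ):ℝ)) := by
          refine mul_le_mul_of_nonneg_left (Real.exp_le_exp.mpr ?_) (by positivity)
          have hmul := mul_le_mul_of_nonneg_left hsy
            (by positivity : (0:ℝ) ≤ Real.pi * ((n:ℕ):ℝ))
          linarith
  have hT2 : ‖((incGamma (1 + 2 * k) (4 * Real.pi * ((n:ℕ):ℝ) * s) : ℝ) : ℂ)
      * ((((2 * Real.pi * ((n:ℕ):ℝ) : ℝ)) : ℂ) * Complex.exp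
        (((2 * Real.pi * ((n:ℕ):ℝ) : ℝ) : ℂ) * (s:ℂ)
          + ((-(2 * Real.pi * ((n:ℕ):ℝ) * x) : ℝ) : ℂ) * Complex.I))‖
      ≤ 2 * Real.pi * ((n:ℕ):ℝ) * ((2 * k).factorial * 4 ^ (2 * k) * (4 / 3) : ℝ)
        * Real.exp (-(Real.pi * y / 2) * ((n:ℕ):ℝ)) := by
    rw [norm_mul, norm_mul, hE, Complex.norm_real, Complex.norm_real, Real.norm_eq_abs,
      Real.norm_eq_abs, _root_.abs_of_nonneg (incGamma_nonneg k (by positivity)),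
      _root_.abs_of_nonneg (by positivity : (0:ℝ) ≤ 2 * Real.pi * ((n:ℕ):ℝ))]
    have hG := incGamma_le k (x := 4 * Real.pi * ((n:ℕ):ℝ) * s) (by positivity)
    have hee : Real.exp (-(3 / 4 * (4 * Real.pi * ((n:ℕ):ℝ) * s)))
        * Real.exp (2 * Real.pi * ((n:ℕ):ℝ) * s)
        = Real.exp (-(Real.pi * ((n:ℕ):ℝ) * s)) := by
      rw [← Real.exp_add]
      congr 1
      ring
    calc incGamma (1 + 2 * k) (4 * Real.pi * ((n:ℕ):ℝ) * s)
          * (2 * Real.pi * ((n:ℕ):ℝ) * Real.exp (2 * Real.pi * ((n:ℕ):ℝ) * s))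
        ≤ (((2 * k).factorial * 4 ^ (2 * k) * (4 / 3) : ℝ)
            * Real.exp (-(3 / 4 * (4 * Real.pi * ((n:ℕ):ℝ) * s))))
          * (2 * Real.pi * ((n:ℕ):ℝ) * Real.exp (2 * Real.pi * ((n:ℕ):ℝ) * s)) := by
          refine mul_le_mul_of_nonneg_right hG (by positivity)
      _ = 2 * Real.pi * ((n:ℕ):ℝ) * ((2 * k).factorial * 4 ^ (2 * k) * (4 / 3) : ℝ)
          * (Real.exp (-(3 / 4 * (4 * Real.pi * ((n:ℕ):ℝ) * s)))
            * Real.exp (2 * Real.pi * ((n:ℕ):ℝ) * s)) := by ring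
      _ = 2 * Real.pi * ((n:ℕ):ℝ) * ((2 * k).factorial * 4 ^ (2 * k) * (4 / 3) : ℝ)
          * Real.exp (-(Real.pi * ((n:ℕ):ℝ) * s)) := by rw [hee]
      _ ≤ 2 * Real.pi * ((n:ℕ):ℝ) * ((2 * k).factorial * 4 ^ (2 * k) * (4 / 3) : ℝ)
          * Real.exp (-(Real.pi * y / 2) * ((n:ℕ):ℝ)) := by
          refine mul_le_mul_of_nonneg_left (Real.exp_le_exp.mpr ?_) (by positivity)
          have hmul := mul_le_mul_of_nonneg_left hsy
            (by positivity : (0:ℝ) ≤ Real.pi * ((n:ℕ):ℝ))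
          linarith
  calc ‖d4 k n x s‖ ≤ ‖Acoef k n‖ * (‖_‖ + ‖_‖) := by
        rw [d4, norm_mul]
        exact mul_le_mul_of_nonneg_left (norm_add_le _ _) (norm_nonneg _)
    _ ≤ ((n:ℕ):ℝ) * ((4 * Real.pi * ((n:ℕ):ℝ) * ((2 * k).factorial * 4 ^ (2 * k) : ℝ)
          * Real.exp (-(Real.pi * y / 2) * ((n:ℕ):ℝ)))
        + (2 * Real.pi * ((n:ℕ):ℝ) * ((2 * k).factorial * 4 ^ (2 * k) * (4 / 3) : ℝ)
          * Real.exp (-(Real.pi * y / 2) * ((n:ℕ):ℝ)))) :=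
        mul_le_mul (normA_le k n) (add_le_add hT1 hT2)
          (by positivity) hn.le
    _ = (4 * Real.pi * ((2 * k).factorial * 4 ^ (2 * k) : ℝ)
        + 2 * Real.pi * ((2 * k).factorial * 4 ^ (2 * k) * (4 / 3) : ℝ))
        * (((n:ℕ):ℝ) ^ 2 * Real.exp (-(Real.pi * y / 2) * ((n:ℕ):ℝ))) := by ring

end XiAux

namespace XiAux
open Complex Set Filter

/-! ### extra summability lemmas -/

lemma summable_dx4 (k : ℕ) {y : ℝ} (hy : 0 < y) (t : ℝ) :
    Summable (fun n : ℕ+ => -(2 * (Real.pi:ℂ) * Complex.I * ((n:ℕ):ℂ))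
      * f4 k n ((t:ℂ) + (y:ℂ) * Complex.I)) := by
  refine Summable.of_norm_bounded
    ((summable_pow_exp 2 (show (0:ℝ) < Real.pi * y by positivity)).mul_left
    (2 * Real.pi * ((2 * k).factorial * 4 ^ (2 * k) * (4 / 3) : ℝ))) fun n => ?_
  rw [norm_mul, norm_neg, norm_coeff]
  have h := norm_f4_le k n hy t
  calc 2 * Real.pi * ((n:ℕ):ℝ) * ‖f4 k n ((t : ℂ) + (y : ℂ) * Complex.I)‖
      ≤ 2 * Real.pi * ((n:ℕ):ℝ) * (((2 * k).factorial * 4 ^ (2 * k) * (4 / 3) : ℝ)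
        * (((n:ℕ):ℝ) * Real.exp (-(Real.pi * y) * ((n:ℕ):ℝ)))) := by
        refine mul_le_mul_of_nonneg_left h (by positivity)
    _ = (2 * Real.pi * ((2 * k).factorial * 4 ^ (2 * k) * (4 / 3) : ℝ))
        * (((n:ℕ):ℝ) ^ 2 * Real.exp (-(Real.pi * y) * ((n:ℕ):ℝ))) := by ring

noncomputable def rterm (k : ℕ) (n : ℕ+) (z : ℂ) : ℂ :=
  Acoef k n * ((-((4 * Real.pi * ((n:ℕ):ℝ) * z.im) ^ (2 * k)
      * Real.exp (-(4 * Real.pi * ((n:ℕ):ℝ) * z.im)) * (4 * Real.pi * ((n:ℕ):ℝ))) : ℝ) : ℂ)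
    * Complex.exp (-(2 * Real.pi * Complex.I * ((n : ℕ) : ℂ) * z))

lemma norm_exp_negz (n : ℕ+) (z : ℂ) :
    ‖Complex.exp (-(2 * Real.pi * Complex.I * ((n : ℕ) : ℂ) * z))‖
      = Real.exp (2 * Real.pi * ((n:ℕ):ℝ) * z.im) := by
  have harg : -(2 * (Real.pi:ℂ) * Complex.I * ((n:ℕ):ℂ) * z)
      = ((2 * Real.pi * ((n:ℕ):ℝ) : ℝ) : ℂ) * ((z.im : ℝ) : ℂ)
        + ((-(2 * Real.pi * ((n:ℕ):ℝ) * z.re) : ℝ) : ℂ) * Complex.I := by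
    conv_lhs => rw [← Complex.re_add_im z]
    exact arg4' n z.re z.im
  rw [harg]
  exact norm_cexp_b _ _ _

lemma norm_rterm_le (k : ℕ) (n : ℕ+) {z : ℂ} (hz : 0 < z.im) :
    ‖rterm k n z‖ ≤ (4 * Real.pi * ((2 * k).factorial * 4 ^ (2 * k) : ℝ))
      * (((n:ℕ):ℝ) ^ 2 * Real.exp (-(Real.pi * z.im) * ((n:ℕ):ℝ))) := by
  have hz' : (0:ℝ) < z.im := hz
  have hn : (0:ℝ) < ((n:ℕ):ℝ) := by exact_mod_cast n.pos
  have hee : Real.exp (-(3 / 4 * (4 * Real.pi * ((n:ℕ):ℝ) * z.im)))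
      * Real.exp (2 * Real.pi * ((n:ℕ):ℝ) * z.im)
      = Real.exp (-(Real.pi * z.im) * ((n:ℕ):ℝ)) := by
    rw [← Real.exp_add]
    congr 1
    ring
  rw [rterm, norm_mul, norm_mul, norm_exp_negz, Complex.norm_real, Real.norm_eq_abs, abs_neg,
    _root_.abs_of_nonneg (by positivity)]
  calc ‖Acoef k n‖ * ((4 * Real.pi * ((n:ℕ):ℝ) * z.im) ^ (2 * k)
        * Real.exp (-(4 * Real.pi * ((n:ℕ):ℝ) * z.im)) * (4 * Real.pi * ((n:ℕ):ℝ)))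
        * Real.exp (2 * Real.pi * ((n:ℕ):ℝ) * z.im)
      ≤ ((n:ℕ):ℝ) * (((2 * k).factorial * 4 ^ (2 * k) : ℝ)
          * Real.exp (-(3 / 4 * (4 * Real.pi * ((n:ℕ):ℝ) * z.im))) * (4 * Real.pi * ((n:ℕ):ℝ)))
        * Real.exp (2 * Real.pi * ((n:ℕ):ℝ) * z.im) := by
        refine mul_le_mul_of_nonneg_right (mul_le_mul (normA_le k n)
          (mul_le_mul_of_nonneg_right (pointwise_bound k (by positivity)) (by positivity))
          (by positivity) hn.le) (Real.exp_pos _).le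
    _ = (4 * Real.pi * ((2 * k).factorial * 4 ^ (2 * k) : ℝ))
        * (((n:ℕ):ℝ) ^ 2 * (Real.exp (-(3 / 4 * (4 * Real.pi * ((n:ℕ):ℝ) * z.im)))
          * Real.exp (2 * Real.pi * ((n:ℕ):ℝ) * z.im))) := by ring
    _ = (4 * Real.pi * ((2 * k).factorial * 4 ^ (2 * k) : ℝ))
        * (((n:ℕ):ℝ) ^ 2 * Real.exp (-(Real.pi * z.im) * ((n:ℕ):ℝ))) := by rw [hee]

lemma summable_rterm (k : ℕ) {z : ℂ} (hz : 0 < z.im) :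
    Summable (fun n : ℕ+ => rterm k n z) := by
  refine Summable.of_norm_bounded
    ((summable_pow_exp 2 (show (0:ℝ) < Real.pi * z.im by positivity)).mul_left
    (4 * Real.pi * ((2 * k).factorial * 4 ^ (2 * k) : ℝ))) fun n => norm_rterm_le k n hz

/-! ### decomposition of G -/

noncomputable def C1 (k : ℕ) : ℂ :=
  ((2 * k).factorial * riemannZeta (2 * (k : ℂ) + 1)) / (2 * Real.pi) ^ (2 * k)

noncomputable def C2 (k : ℕ) : ℂ :=
  (-1 : ℂ) ^ (k + 1) * 2 ^ (1 + 2 * k) * (Real.pi : ℂ)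
    * riemannZeta (-2 * (k : ℂ) - 1) / (2 * (k : ℂ) + 1)

noncomputable def C3 (k : ℕ) : ℂ :=
  (-1 : ℂ) ^ k / (2 * Real.pi) ^ (2 * k) * (2 * k).factorial

noncomputable def C4 (k : ℕ) : ℂ := (-1 : ℂ) ^ k / (2 * Real.pi) ^ (2 * k)

lemma G_eq (k : ℕ) (z : ℂ) :
    G k z = C1 k + C2 k * ((z.im : ℝ) : ℂ) ^ (1 + 2 * k)
      + C3 k * ∑' n : ℕ+, f3 k n z + C4 k * ∑' n : ℕ+, f4 k n z := by
  simp only [G, C1, C2, C3, C4, f3, f4, Acoef]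
  ring

/-! ### values of the partial derivatives -/

lemma dZx_eq (k : ℕ) {z : ℂ} (hz : 0 < z.im) :
    dZx (G k) z
      = C3 k * (∑' n : ℕ+, 2 * (Real.pi:ℂ) * Complex.I * ((n:ℕ):ℂ) * f3 k n z)
        + C4 k * (∑' n : ℕ+, -(2 * (Real.pi:ℂ) * Complex.I * ((n:ℕ):ℂ)) * f4 k n z) := by
  have h3 := (hasDerivAt_S3x k hz z.re).const_mul (C3 k)
  have h4 := (hasDerivAt_S4x k hz z.re).const_mul (C4 k)
  have h := (h3.add h4).const_add (C1 k + C2 k * ((z.im : ℝ) : ℂ) ^ (1 + 2 * k))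
  have e1 : (fun t : ℝ => (C1 k + C2 k * ((z.im : ℝ) : ℂ) ^ (1 + 2 * k))
      + (C3 k * ∑' n : ℕ+, f3 k n ((t:ℂ) + (z.im : ℂ) * Complex.I)
        + C4 k * ∑' n : ℕ+, f4 k n ((t:ℂ) + (z.im : ℂ) * Complex.I)))
      = fun t : ℝ => G k ((t:ℂ) + (z.im : ℂ) * Complex.I) := by
    funext t
    rw [G_eq, im_aux]
    ring
  simp only [Pi.add_apply] at h; rw [e1] at h
  rw [Complex.re_add_im] at h
  unfold dZx
  exact h.deriv

lemma dZy_eq (k : ℕ) {z : ℂ} (hz : 0 < z.im) :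
    dZy (G k) z
      = C2 k * (((1 + 2 * k : ℕ) : ℂ) * ((z.im : ℝ) : ℂ) ^ (2 * k))
        + (C3 k * (∑' n : ℕ+, ((-(2 * Real.pi * ((n:ℕ):ℝ)) : ℝ) : ℂ) * f3 k n z)
          + C4 k * (∑' n : ℕ+, d4 k n z.re z.im)) := by
  have h2 : HasDerivAt (fun s : ℝ => C2 k * ((s : ℝ) : ℂ) ^ (1 + 2 * k))
      (C2 k * (((1 + 2 * k : ℕ) : ℂ) * ((z.im : ℝ) : ℂ) ^ (2 * k))) z.im := by
    have h := ((hasDerivAt_pow (1 + 2 * k) ((z.im : ℝ) : ℂ)).comp_ofReal).const_mul (C2 k)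
    simpa [show 1 + 2 * k - 1 = 2 * k from by omega] using h
  have h3 := (hasDerivAt_S3y k hz z.re).const_mul (C3 k)
  have h4 := (hasDerivAt_S4y k hz z.re).const_mul (C4 k)
  have h := (h2.add (h3.add h4)).const_add (C1 k)
  have e1 : (fun s : ℝ => (C1 k) + (C2 k * ((s : ℝ) : ℂ) ^ (1 + 2 * k)
      + (C3 k * ∑' n : ℕ+, f3 k n ((z.re : ℂ) + (s:ℂ) * Complex.I
        ) + C4 k * ∑' n : ℕ+, f4 k n ((z.re : ℂ) + (s:ℂ) * Complex.I))))
      = fun s : ℝ => G k ((z.re : ℂ) + (s:ℂ) * Complex.I) := by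
    funext s
    rw [G_eq, im_aux']
    ring
  simp only [Pi.add_apply] at h; rw [e1] at h
  rw [Complex.re_add_im] at h
  unfold dZy
  exact h.deriv

/-! ### conjugation lemmas -/

lemma conj_zeta (k : ℕ) :
    (starRingEnd ℂ) (riemannZeta (-2 * (k:ℂ) - 1)) = riemannZeta (-2 * (k:ℂ) - 1) := by
  have h : (-2 * (k:ℂ) - 1) = -((2 * k + 1 : ℕ) : ℂ) := by
    push_cast
    ring
  rw [h, riemannZeta_neg_nat_eq_bernoulli]
  simp [map_div₀, map_ofNat]

lemma conj_C2 (k : ℕ) : (starRingEnd ℂ) (C2 k) = C2 k := by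
  rw [C2]
  rw [map_div₀, map_mul, map_mul, map_mul, map_pow, map_pow, map_neg, map_one,
    Complex.conj_ofReal, conj_zeta, map_add, map_mul, map_natCast, map_ofNat]
  norm_num

lemma conj_C4 (k : ℕ) : (starRingEnd ℂ) (C4 k) = C4 k := by
  rw [C4, map_div₀, map_pow, map_pow, map_neg, map_one, map_mul, map_ofNat,
    Complex.conj_ofReal]

lemma conj_rterm (k : ℕ) (n : ℕ+) (z : ℂ) :
    (starRingEnd ℂ) (rterm k n z)
      = ((-((4 * Real.pi * ((n:ℕ):ℝ) * z.im) ^ (2 * k) * (4 * Real.pi * ((n:ℕ):ℝ))) : ℝ) : ℂ)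
        * Acoef k n * Complex.exp (2 * Real.pi * Complex.I * ((n : ℕ) : ℂ) * z) := by
  have hA : (starRingEnd ℂ) (Acoef k n) = Acoef k n := by
    simp [Acoef, map_div₀]
  have hconjarg : (starRingEnd ℂ) (-(2 * (Real.pi:ℂ) * Complex.I * ((n:ℕ):ℂ) * z))
      = 2 * (Real.pi:ℂ) * Complex.I * ((n:ℕ):ℂ) * ((starRingEnd ℂ) z) := by
    rw [map_neg, map_mul, map_mul, map_mul, map_mul, map_ofNat, Complex.conj_ofReal,
      Complex.conj_I, map_natCast]
    ring
  have hz2 : 2 * (Real.pi:ℂ) * Complex.I * ((n:ℕ):ℂ) * ((starRingEnd ℂ) z)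
      = 2 * (Real.pi:ℂ) * Complex.I * ((n:ℕ):ℂ) * z + ((4 * Real.pi * ((n:ℕ):ℝ) * z.im : ℝ) : ℂ) := by
    have hcz : (starRingEnd ℂ) z = (z.re : ℂ) - (z.im : ℂ) * Complex.I := by
      apply Complex.ext <;> simp
    have hz3 : z = (z.re : ℂ) + (z.im : ℂ) * Complex.I := (Complex.re_add_im z).symm
    push_cast
    linear_combination (2 * (Real.pi:ℂ) * Complex.I * ((n:ℕ):ℂ)) * hcz
      - (2 * (Real.pi:ℂ) * Complex.I * ((n:ℕ):ℂ)) * hz3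
      + (-4 * (Real.pi:ℂ) * ((n:ℕ):ℂ) * (z.im : ℂ)) * Complex.I_sq
  have hsplit : ((Real.exp (-(4 * Real.pi * ((n:ℕ):ℝ) * z.im)) : ℝ) : ℂ)
      * Complex.exp (2 * (Real.pi:ℂ) * Complex.I * ((n:ℕ):ℂ) * ((starRingEnd ℂ) z))
      = Complex.exp (2 * (Real.pi:ℂ) * Complex.I * ((n:ℕ):ℂ) * z) := by
    rw [Complex.ofReal_exp, ← Complex.exp_add, hz2]
    congr 1
    push_cast
    ring
  rw [rterm, map_mul, map_mul, hA, Complex.conj_ofReal, ← Complex.exp_conj, hconjarg]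
  rw [show ((-((4 * Real.pi * ((n:ℕ):ℝ) * z.im) ^ (2 * k)
      * Real.exp (-(4 * Real.pi * ((n:ℕ):ℝ) * z.im)) * (4 * Real.pi * ((n:ℕ):ℝ))) : ℝ) : ℂ)
    = ((-((4 * Real.pi * ((n:ℕ):ℝ) * z.im) ^ (2 * k) * (4 * Real.pi * ((n:ℕ):ℝ))) : ℝ) : ℂ)
      * ((Real.exp (-(4 * Real.pi * ((n:ℕ):ℝ) * z.im)) : ℝ) : ℂ) from by push_cast; ring]
  calc Acoef k n * (((-((4 * Real.pi * ((n:ℕ):ℝ) * z.im) ^ (2 * k) * (4 * Real.pi * ((n:ℕ):ℝ))) : ℝ) : ℂ)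
        * ((Real.exp (-(4 * Real.pi * ((n:ℕ):ℝ) * z.im)) : ℝ) : ℂ))
        * Complex.exp (2 * (Real.pi:ℂ) * Complex.I * ((n:ℕ):ℂ) * ((starRingEnd ℂ) z))
      = ((-((4 * Real.pi * ((n:ℕ):ℝ) * z.im) ^ (2 * k) * (4 * Real.pi * ((n:ℕ):ℝ))) : ℝ) : ℂ)
        * Acoef k n * (((Real.exp (-(4 * Real.pi * ((n:ℕ):ℝ) * z.im)) : ℝ) : ℂ)
          * Complex.exp (2 * (Real.pi:ℂ) * Complex.I * ((n:ℕ):ℂ) * ((starRingEnd ℂ) z))) := by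
        ring
    _ = ((-((4 * Real.pi * ((n:ℕ):ℝ) * z.im) ^ (2 * k) * (4 * Real.pi * ((n:ℕ):ℝ))) : ℝ) : ℂ)
        * Acoef k n * Complex.exp (2 * (Real.pi:ℂ) * Complex.I * ((n:ℕ):ℂ) * z) := by
        rw [hsplit]

end XiAux

namespace XiAux
open Complex

lemma combine_aux (A P Γ E c : ℂ) :
    A * (P * E + Γ * (c * E)) = Complex.I * (-(c * Complex.I) * (A * Γ * E)) + A * P * E := by
  linear_combination (c * A * Γ * E) * Complex.I_sq

end XiAux

open XiAux in
/-- the image of `G(z, -2k)` under the weight `-2k` ξ-operator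
`ξ_w(f) = 2i y^w conj(∂f/∂z̄)`, with `∂/∂z̄ = (1/2)(∂/∂x + i ∂/∂y)`, equals
`(-1)^(k+1) 2^(2k+2) π` times the classical Eisenstein series `G_{2k+2}(z)`. -/
theorem xi_G_eq_eisenstein (k : ℕ) (hk : 1 ≤ k) (z : ℂ) (hz : 0 < z.im) :
    2 * Complex.I * ((z.im ^ (-(2 * k : ℤ)) : ℝ) : ℂ) *
      (starRingEnd ℂ) ((1 / 2) * (dZx (G k) z + Complex.I * dZy (G k) z))
      = (-1 : ℂ) ^ (k + 1) * 2 ^ (2 * k + 2) * (Real.pi : ℂ) *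
        ((1 / 2) * riemannZeta (-2 * (k : ℂ) - 1) +
          ∑' n : ℕ+, ((sigma' (2 * k + 1) n : ℂ)) *
            Complex.exp (2 * Real.pi * Complex.I * ((n : ℕ) : ℂ) * z)) := by
  have hzeq : (z.re : ℂ) + (z.im : ℂ) * Complex.I = z := Complex.re_add_im z
  have hz' : (0:ℝ) < z.im := hz
  -- T3 = I * S3
  have hT3 : (∑' n : ℕ+, ((-(2 * Real.pi * ((n:ℕ):ℝ)) : ℝ) : ℂ) * f3 k n z)
      = Complex.I * ∑' n : ℕ+, 2 * (Real.pi:ℂ) * Complex.I * ((n:ℕ):ℂ) * f3 k n z := by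
    rw [← tsum_mul_left]
    refine tsum_congr fun n => ?_
    push_cast
    linear_combination (-(2 * (Real.pi:ℂ) * ((n:ℕ):ℂ)) * f3 k n z) * Complex.I_sq
  -- d4 split
  have hd4 : ∀ n : ℕ+, d4 k n z.re z.im
      = Complex.I * (-(2 * (Real.pi:ℂ) * Complex.I * ((n:ℕ):ℂ)) * f4 k n z) + rterm k n z := by
    intro n
    have harg : -(2 * (Real.pi:ℂ) * Complex.I * ((n:ℕ):ℂ) * z)
        = ((2 * Real.pi * ((n:ℕ):ℝ) : ℝ) : ℂ) * ((z.im : ℝ) : ℂ)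
          + ((-(2 * Real.pi * ((n:ℕ):ℝ) * z.re) : ℝ) : ℂ) * Complex.I := by
      conv_lhs => rw [← hzeq]
      exact arg4' n z.re z.im
    have hco : -(2 * (Real.pi:ℂ) * Complex.I * ((n:ℕ):ℂ))
        = -(((2 * Real.pi * ((n:ℕ):ℝ) : ℝ) : ℂ) * Complex.I) := by
      push_cast
      ring
    rw [d4, rterm, f4, harg, hco]
    exact combine_aux _ _ _ _ _
  -- summability
  have hsum4 : Summable (fun n : ℕ+ => -(2 * (Real.pi:ℂ) * Complex.I * ((n:ℕ):ℂ)) * f4 k n z) := by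
    have h := summable_dx4 k hz z.re
    simp only [hzeq] at h
    exact h
  have hsumr : Summable (fun n : ℕ+ => rterm k n z) := summable_rterm k hz
  -- T4 split
  have hT4 : (∑' n : ℕ+, d4 k n z.re z.im)
      = Complex.I * (∑' n : ℕ+, -(2 * (Real.pi:ℂ) * Complex.I * ((n:ℕ):ℂ)) * f4 k n z)
        + ∑' n : ℕ+, rterm k n z := by
    calc (∑' n : ℕ+, d4 k n z.re z.im)
        = ∑' n : ℕ+, (Complex.I * (-(2 * (Real.pi:ℂ) * Complex.I * ((n:ℕ):ℂ)) * f4 k n z)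
            + rterm k n z) := tsum_congr hd4
      _ = (∑' n : ℕ+, Complex.I * (-(2 * (Real.pi:ℂ) * Complex.I * ((n:ℕ):ℂ)) * f4 k n z))
          + ∑' n : ℕ+, rterm k n z := Summable.tsum_add (hsum4.mul_left _) hsumr
      _ = Complex.I * (∑' n : ℕ+, -(2 * (Real.pi:ℂ) * Complex.I * ((n:ℕ):ℂ)) * f4 k n z)
          + ∑' n : ℕ+, rterm k n z := by rw [tsum_mul_left]
  -- combine
  have hW : dZx (G k) z + Complex.I * dZy (G k) z
      = Complex.I * (C2 k * (((1 + 2 * k : ℕ) : ℂ) * ((z.im : ℝ) : ℂ) ^ (2 * k))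
          + C4 k * ∑' n : ℕ+, rterm k n z) := by
    rw [dZx_eq k hz, dZy_eq k hz, hT3, hT4]
    linear_combination (C3 k * (∑' n : ℕ+, 2 * (Real.pi:ℂ) * Complex.I * ((n:ℕ):ℂ) * f3 k n z)
      + C4 k * (∑' n : ℕ+, -(2 * (Real.pi:ℂ) * Complex.I * ((n:ℕ):ℂ)) * f4 k n z))
      * Complex.I_sq
  -- conjugations
  have hconjR : (starRingEnd ℂ) (∑' n : ℕ+, rterm k n z)
      = ∑' n : ℕ+, (starRingEnd ℂ) (rterm k n z) := by
    rw [starRingEnd_apply, tsum_star]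
    simp only [starRingEnd_apply]
  have hp : ((z.im ^ (-(2 * k : ℤ)) : ℝ) : ℂ) = ((((z.im : ℝ) : ℂ)) ^ (2 * k))⁻¹ := by
    rw [show (2 * k : ℤ) = ((2 * k : ℕ) : ℤ) from by push_cast; ring, zpow_neg, zpow_natCast]
    push_cast
    ring
  rw [hW, hp]
  simp only [map_mul, map_add, map_pow, map_natCast, map_div₀, map_one, map_ofNat,
    Complex.conj_ofReal, conj_C2, conj_C4, Complex.conj_I]
  rw [hconjR, show (∑' n : ℕ+, (starRingEnd ℂ) (rterm k n z))
      = ∑' n : ℕ+, ((-((4 * Real.pi * ((n:ℕ):ℝ) * z.im) ^ (2 * k)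
          * (4 * Real.pi * ((n:ℕ):ℝ))) : ℝ) : ℂ) * Acoef k n
        * Complex.exp (2 * Real.pi * Complex.I * ((n : ℕ) : ℂ) * z)
      from tsum_congr fun n => conj_rterm k n z]
  have hIred : ∀ X : ℂ, 2 * Complex.I * ((((z.im : ℝ) : ℂ)) ^ (2 * k))⁻¹
      * (1 / 2 * (-Complex.I * X)) = ((((z.im : ℝ) : ℂ)) ^ (2 * k))⁻¹ * X := fun X => by
    linear_combination (-(((((z.im : ℝ) : ℂ)) ^ (2 * k))⁻¹ * X)) * Complex.I_sq
  rw [hIred, mul_add, mul_add]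
  have hY0 : (((z.im : ℝ) : ℂ)) ^ (2 * k) ≠ 0 :=
    pow_ne_zero _ (Complex.ofReal_ne_zero.mpr (ne_of_gt hz))
  have hπ0 : ((Real.pi : ℝ) : ℂ) ≠ 0 := Complex.ofReal_ne_zero.mpr Real.pi_ne_zero
  have hk0 : (2 * (k:ℂ) + 1) ≠ 0 := by
    have h := (Nat.cast_ne_zero (R := ℂ)).mpr (show 2 * k + 1 ≠ 0 by omega)
    push_cast at h
    exact h
  congr 1
  · -- constant terms
    rw [C2]
    field_simp
    push_cast
    ring
  · -- series terms
    calc ((((z.im : ℝ) : ℂ)) ^ (2 * k))⁻¹ * (C4 k * ∑' n : ℕ+,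
          ((-((4 * Real.pi * ((n:ℕ):ℝ) * z.im) ^ (2 * k) * (4 * Real.pi * ((n:ℕ):ℝ))) : ℝ) : ℂ)
            * Acoef k n * Complex.exp (2 * Real.pi * Complex.I * ((n : ℕ) : ℂ) * z))
        = ∑' n : ℕ+, ((((z.im : ℝ) : ℂ)) ^ (2 * k))⁻¹ * (C4 k
          * (((-((4 * Real.pi * ((n:ℕ):ℝ) * z.im) ^ (2 * k) * (4 * Real.pi * ((n:ℕ):ℝ))) : ℝ) : ℂ)
            * Acoef k n * Complex.exp (2 * Real.pi * Complex.I * ((n : ℕ) : ℂ) * z))) := by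
          rw [tsum_mul_left, tsum_mul_left]
      _ = ∑' n : ℕ+, (-1 : ℂ) ^ (k + 1) * 2 ^ (2 * k + 2) * (Real.pi : ℂ)
            * (((sigma' (2 * k + 1) n : ℂ))
              * Complex.exp (2 * Real.pi * Complex.I * ((n : ℕ) : ℂ) * z)) := by
          refine tsum_congr fun n => ?_
          have hn0 : ((n:ℕ) : ℂ) ^ (2 * k + 1) ≠ 0 :=
            pow_ne_zero _ (Nat.cast_ne_zero.mpr n.pos.ne')
          rw [C4, Acoef]
          push_cast
          field_simp
          ring_nf
          rw [show (4:ℂ) ^ (k * 2) = 2 ^ (k * 4) from by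
            rw [show (4:ℂ) = 2 ^ 2 from by norm_num, ← pow_mul]
            congr 1
            ring]
      _ = (-1 : ℂ) ^ (k + 1) * 2 ^ (2 * k + 2) * (Real.pi : ℂ)
          * ∑' n : ℕ+, ((sigma' (2 * k + 1) n : ℂ))
            * Complex.exp (2 * Real.pi * Complex.I * ((n : ℕ) : ℂ) * z) := tsum_mul_left
      _ = (-1 : ℂ) ^ (k + 1) * 2 ^ (2 * k + 2) * (Real.pi : ℂ)
          * ∑' n : ℕ+, ((sigma' (2 * k + 1) n : ℂ))
            * Complex.exp (2 * Real.pi * Complex.I * ((n : ℕ) : ℂ) * z) := rfl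
end

section
/- Let k be a positive integer, let s be a real number with s > k + 1, and let z = x+iy be in the upper half-plane ℍ. Then Σ_{n∈ℤ} (z+n)^{2k}·|z+n|^{−2s} = y^{1+2k−2s} · Σ_{n∈ℤ} ( ∫_{−∞}^{∞} (t+i)^{2k}·(t²+1)^{−s}·e^{−2πinyt} dt ) · e^{2πinx}, where both series converge absolutely. -/
open scoped Real BigOperators
open MeasureTheory

open scoped FourierTransform
open Polynomial Complex Filter

noncomputable def FF (y : ℝ) (p : Polynomial ℂ) (r : ℝ) : ℝ → ℂ :=
  fun t => p.eval (t : ℂ) * ((((t ^ 2 + y ^ 2) ^ r : ℝ)) : ℂ)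

noncomputable def pstep (y : ℝ) (p : Polynomial ℂ) (r : ℝ) : Polynomial ℂ :=
  Polynomial.derivative p * (X ^ 2 + C ((y : ℂ) ^ 2)) + C (2 * r : ℂ) * X * p

lemma FF_pos (y : ℝ) (hy : 0 < y) (t : ℝ) : 0 < t ^ 2 + y ^ 2 := by positivity

lemma FF_hasDerivAt (y : ℝ) (hy : 0 < y) (p : Polynomial ℂ) (r : ℝ) (t : ℝ) :
    HasDerivAt (FF y p r) (FF y (pstep y p r) (r - 1) t) t := by
  have hpos : 0 < t ^ 2 + y ^ 2 := FF_pos y hy t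
  have h1 : HasDerivAt (fun u : ℝ => p.eval (u : ℂ)) ((Polynomial.derivative p).eval (t : ℂ)) t :=
    (p.hasDerivAt (t : ℂ)).comp_ofReal
  have hin : HasDerivAt (fun u : ℝ => u ^ 2 + y ^ 2) (2 * t) t := by
    simpa using (hasDerivAt_pow 2 t).add_const (y ^ 2)
  have hout : HasDerivAt (fun u : ℝ => u ^ r) (r * (t ^ 2 + y ^ 2) ^ (r - 1)) (t ^ 2 + y ^ 2) :=
    Real.hasDerivAt_rpow_const (Or.inl hpos.ne')
  have h2 : HasDerivAt (fun u : ℝ => ((u ^ 2 + y ^ 2) ^ r : ℝ))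
      (r * (t ^ 2 + y ^ 2) ^ (r - 1) * (2 * t)) t := by have := hout.comp t hin; exact this
  have h2c : HasDerivAt (fun u : ℝ => ((((u ^ 2 + y ^ 2) ^ r : ℝ)) : ℂ))
      (((r * (t ^ 2 + y ^ 2) ^ (r - 1) * (2 * t) : ℝ)) : ℂ) t := h2.ofReal_comp
  have h := h1.mul h2c
  have key : ((t ^ 2 + y ^ 2) ^ r : ℝ) = (t ^ 2 + y ^ 2) ^ (r - 1) * (t ^ 2 + y ^ 2) := by
    nth_rewrite 1 [show r = (r - 1) + 1 by ring]
    rw [Real.rpow_add hpos, Real.rpow_one]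
  convert h using 1
  · rfl
  · rfl
  simp only [FF, pstep, Polynomial.eval_add, Polynomial.eval_mul, Polynomial.eval_pow,
    Polynomial.eval_X, Polynomial.eval_C, key]
  push_cast
  ring

lemma FF_deriv (y : ℝ) (hy : 0 < y) (p : Polynomial ℂ) (r : ℝ) :
    deriv (FF y p r) = FF y (pstep y p r) (r - 1) := by
  funext t; exact (FF_hasDerivAt y hy p r t).deriv

lemma FF_continuous (y : ℝ) (hy : 0 < y) (p : Polynomial ℂ) (r : ℝ) :
    Continuous (FF y p r) := by
  apply Continuous.mul
  · exact p.continuous_aeval.comp Complex.continuous_ofReal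
  · exact Complex.continuous_ofReal.comp <|
      (((continuous_pow 2).add continuous_const).rpow_const
        (fun t => Or.inl (FF_pos y hy t).ne'))

lemma FF_contDiff_two (y : ℝ) (hy : 0 < y) (p : Polynomial ℂ) (r : ℝ) :
    ContDiff ℝ 2 (FF y p r) := by
  have hdiff : ∀ (q : Polynomial ℂ) (u : ℝ), Differentiable ℝ (FF y q u) :=
    fun q u => fun t => (FF_hasDerivAt y hy q u t).differentiableAt
  rw [show (2 : WithTop ℕ∞) = 1 + 1 from rfl, contDiff_succ_iff_deriv]
  refine ⟨hdiff p r, by simp, ?_⟩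
  rw [FF_deriv y hy p r, contDiff_one_iff_deriv]
  exact ⟨hdiff _ _, by rw [FF_deriv y hy]; exact FF_continuous y hy _ _⟩

lemma poly_bound (p : Polynomial ℂ) :
    ∃ C : ℝ, 0 ≤ C ∧ ∀ t : ℝ, 1 ≤ |t| → ‖p.eval (t : ℂ)‖ ≤ C * |t| ^ p.natDegree := by
  refine ⟨∑ i ∈ Finset.range (p.natDegree + 1), ‖p.coeff i‖,
    Finset.sum_nonneg fun i _ => norm_nonneg _, fun t ht => ?_⟩
  rw [Polynomial.eval_eq_sum_range, Finset.sum_mul]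
  refine (norm_sum_le _ _).trans (Finset.sum_le_sum fun i hi => ?_)
  rw [norm_mul, norm_pow, Complex.norm_real, Real.norm_eq_abs]
  have h1 : |t| ^ i ≤ |t| ^ p.natDegree :=
    pow_le_pow_right₀ ht (Nat.lt_succ_iff.mp (Finset.mem_range.mp hi))
  exact mul_le_mul_of_nonneg_left h1 (norm_nonneg _)

lemma cocompact_mem : {t : ℝ | 1 ≤ |t|} ∈ Filter.cocompact ℝ := by
  rw [Filter.mem_cocompact]
  refine ⟨Set.Icc (-1) 1, isCompact_Icc, fun t ht => ?_⟩
  simp only [Set.mem_compl_iff, Set.mem_Icc, not_and_or, not_le] at ht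
  simp only [Set.mem_setOf_eq, le_abs]
  rcases ht with h | h
  · exact Or.inr (by linarith)
  · exact Or.inl h.le

lemma FF_isBigO (y : ℝ) (hy : 0 < y) (p : Polynomial ℂ) (r : ℝ) (hr : r ≤ 0) :
    (FF y p r) =O[Filter.cocompact ℝ] (fun t => |t| ^ ((p.natDegree : ℝ) + 2 * r)) := by
  obtain ⟨C, hC0, hC⟩ := poly_bound p
  refine Asymptotics.IsBigO.of_bound C (Filter.eventually_of_mem cocompact_mem fun t ht => ?_)
  have htpos : 0 < |t| := lt_of_lt_of_le one_pos ht
  have hpos : 0 < t ^ 2 + y ^ 2 := FF_pos y hy t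
  have habs : ‖FF y p r t‖ = ‖p.eval (t : ℂ)‖ * (t ^ 2 + y ^ 2) ^ r := by
    rw [FF, norm_mul, Complex.norm_real, Real.norm_eq_abs,
      _root_.abs_of_nonneg (Real.rpow_nonneg hpos.le r)]
  have h2 : (t ^ 2 + y ^ 2) ^ r ≤ |t| ^ (2 * r) := by
    have : (t ^ 2 + y ^ 2) ^ r ≤ (t ^ 2) ^ r :=
      Real.rpow_le_rpow_of_nonpos (by nlinarith [_root_.sq_abs t]) (by nlinarith [sq_nonneg y]) hr
    refine this.trans_eq ?_
    rw [← _root_.sq_abs, ← Real.rpow_natCast |t| 2, ← Real.rpow_mul (abs_nonneg t)]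
    norm_num
  rw [habs, Real.norm_eq_abs, _root_.abs_of_nonneg (Real.rpow_nonneg (abs_nonneg t) _),
    Real.rpow_add htpos, Real.rpow_natCast]
  calc ‖p.eval (t : ℂ)‖ * (t ^ 2 + y ^ 2) ^ r
      ≤ (C * |t| ^ p.natDegree) * (|t| ^ (2 * r)) := by
        apply mul_le_mul (hC t ht) h2 (Real.rpow_nonneg hpos.le r) (by positivity)
    _ = C * (|t| ^ p.natDegree * |t| ^ (2 * r)) := by ring

lemma abs_rpow_integrableAtFilter {e : ℝ} (he : e < -1) :
    IntegrableAtFilter (fun t : ℝ => |t| ^ e) (Filter.cocompact ℝ) := by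
  refine ⟨{t : ℝ | 1 ≤ |t|}, cocompact_mem, ?_⟩
  have hIci : IntegrableOn (fun t : ℝ => |t| ^ e) (Set.Ici 1) := by
    rw [integrableOn_Ici_iff_integrableOn_Ioi]
    exact (integrableOn_Ioi_rpow_of_lt he one_pos).congr_fun
      (fun t (ht : t ∈ Set.Ioi (1:ℝ)) => by
        rw [abs_of_pos (lt_trans one_pos ht)]) measurableSet_Ioi
  have hind : Integrable ((Set.Ici (1:ℝ)).indicator (fun t : ℝ => |t| ^ e)) :=
    (MeasureTheory.integrable_indicator_iff measurableSet_Ici).2 hIci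
  have hneg := hind.comp_neg
  have heq : (fun t : ℝ => (Set.Ici (1:ℝ)).indicator (fun u : ℝ => |u| ^ e) (-t))
      = (Set.Iic (-1:ℝ)).indicator (fun u : ℝ => |u| ^ e) := by
    funext t
    by_cases ht : t ≤ -1
    · rw [Set.indicator_of_mem (by simp only [Set.mem_Ici]; linarith),
        Set.indicator_of_mem (by simpa using ht), abs_neg]
    · rw [Set.indicator_of_notMem (by simp only [Set.mem_Ici]; intro h; exact ht (by linarith)),
        Set.indicator_of_notMem (by simpa using ht)]
  have hIic : IntegrableOn (fun t : ℝ => |t| ^ e) (Set.Iic (-1)) :=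
    (MeasureTheory.integrable_indicator_iff measurableSet_Iic).1 (heq ▸ hneg)
  have : {t : ℝ | 1 ≤ |t|} = Set.Iic (-1) ∪ Set.Ici 1 := by
    ext t; simp [le_abs, Set.mem_Iic, Set.mem_Ici, or_comm, le_neg]
  rw [this]
  exact hIic.union hIci

lemma FF_integrable (y : ℝ) (hy : 0 < y) (p : Polynomial ℂ) (r : ℝ) (hr : r ≤ 0)
    (hd : (p.natDegree : ℝ) + 2 * r < -1) : Integrable (FF y p r) := by
  exact ((FF_continuous y hy p r).locallyIntegrable).integrable_of_isBigO_cocompact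
    (FF_isBigO y hy p r hr) (abs_rpow_integrableAtFilter hd)

lemma pstep_natDegree_le (y : ℝ) (p : Polynomial ℂ) (r : ℝ) :
    (pstep y p r).natDegree ≤ p.natDegree + 1 := by
  refine (Polynomial.natDegree_add_le _ _).trans (max_le ?_ ?_)
  · rcases Nat.eq_zero_or_pos p.natDegree with h0 | hpos
    · obtain ⟨a, rfl⟩ := Polynomial.natDegree_eq_zero.mp h0
      simp
    · refine Polynomial.natDegree_mul_le.trans ?_
      have h1 : (Polynomial.derivative p).natDegree ≤ p.natDegree - 1 :=
        Polynomial.natDegree_derivative_le p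
      have h2 : (X ^ 2 + C ((y : ℂ) ^ 2) : Polynomial ℂ).natDegree ≤ 2 := by
        refine (Polynomial.natDegree_add_le _ _).trans (max_le ?_ ?_) <;>
          simp [Polynomial.natDegree_X_pow]
      omega
  · refine Polynomial.natDegree_mul_le.trans ?_
    have h1 : (C (2 * r : ℂ) * X : Polynomial ℂ).natDegree ≤ 1 :=
      (Polynomial.natDegree_C_mul_le _ _).trans Polynomial.natDegree_X_le
    omega

lemma FF_fourier_summable (y : ℝ) (hy : 0 < y) (p : Polynomial ℂ) (r : ℝ)
    (hr : r ≤ 0) (hd : (p.natDegree : ℝ) + 2 * r < -1) :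
    Summable fun n : ℤ => 𝓕 (FF y p r) n := by
  set f := FF y p r with hf
  set p1 := pstep y p r with hp1
  set p2 := pstep y p1 (r - 1) with hp2
  have hdeg1 : ((p1.natDegree : ℝ)) ≤ (p.natDegree : ℝ) + 1 := by
    exact_mod_cast pstep_natDegree_le y p r
  have hdeg2 : ((p2.natDegree : ℝ)) ≤ (p1.natDegree : ℝ) + 1 := by
    exact_mod_cast pstep_natDegree_le y p1 (r - 1)
  have h0 : Integrable f := FF_integrable y hy p r hr hd
  have h1 : Integrable (FF y p1 (r - 1)) :=
    FF_integrable y hy p1 (r - 1) (by linarith) (by linarith)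
  have h2 : Integrable (FF y p2 (r - 1 - 1)) :=
    FF_integrable y hy p2 (r - 1 - 1) (by linarith) (by linarith)
  have hit2 : iteratedDeriv 2 f = FF y p2 (r - 1 - 1) := by
    rw [show (2 : ℕ) = 1 + 1 from rfl, iteratedDeriv_succ, iteratedDeriv_one,
      hf, FF_deriv y hy, FF_deriv y hy]
  have hint : ∀ n : ℕ, (n : ℕ∞) ≤ (2 : ℕ∞) → Integrable (iteratedDeriv n f) := by
    intro n hn
    have hn2 : n ≤ 2 := by exact_mod_cast hn
    interval_cases n
    · simpa [iteratedDeriv_zero] using h0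
    · rw [iteratedDeriv_one, hf, FF_deriv y hy]; exact h1
    · rw [hit2]; exact h2
  have hcd : ContDiff ℝ ((2 : ℕ∞) : WithTop ℕ∞) f := by
    exact_mod_cast FF_contDiff_two y hy p r
  have E := Real.fourier_iteratedDeriv (N := (2 : ℕ∞)) (n := 2) hcd hint le_rfl
  set C2 : ℝ := ∫ t : ℝ, ‖iteratedDeriv 2 f t‖ with hC2def
  have hC2 : ∀ w : ℝ, ‖𝓕 (iteratedDeriv 2 f) w‖ ≤ C2 := fun w =>
    VectorFourier.norm_fourierIntegral_le_integral_norm _ _ _ _ _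
  have hbound : ∀ n : ℤ, n ≠ 0 →
      ‖𝓕 f (n : ℝ)‖ ≤ (C2 / (4 * Real.pi ^ 2)) * |(n : ℝ)| ^ (-2 : ℝ) := by
    intro n hn
    have hn' : ((n : ℝ)) ≠ 0 := Int.cast_ne_zero.mpr hn
    have hE := congrFun E (n : ℝ)
    have hnorm : ‖(2 * ↑Real.pi * Complex.I * ((n : ℝ) : ℂ)) ^ 2‖ = 4 * Real.pi ^ 2 * (n : ℝ) ^ 2 := by
      rw [norm_pow]
      simp only [norm_mul, Complex.norm_real, Real.norm_eq_abs, Complex.norm_I, mul_one,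
        Complex.norm_ofNat]
      rw [_root_.abs_of_pos Real.pi_pos, mul_pow, mul_pow, _root_.sq_abs]
      ring
    have hne : ((2 * ↑Real.pi * Complex.I * ((n : ℝ) : ℂ)) ^ 2) ≠ 0 := by
      apply pow_ne_zero
      simp [Real.pi_ne_zero, hn, Complex.I_ne_zero]
    have : 𝓕 f (n : ℝ) = ((2 * ↑Real.pi * Complex.I * ((n : ℝ) : ℂ)) ^ 2)⁻¹ •
        𝓕 (iteratedDeriv 2 f) (n : ℝ) := by
      rw [hE, smul_smul, inv_mul_cancel₀ hne, one_smul]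
    rw [this, norm_smul, norm_inv, hnorm]
    rw [Real.rpow_neg (abs_nonneg _), Real.rpow_two]
    have h4 : (0 : ℝ) < 4 * Real.pi ^ 2 * (n : ℝ) ^ 2 := by
      have := Real.pi_pos
      have : (0:ℝ) < (n:ℝ)^2 := by positivity
      positivity
    rw [_root_.sq_abs]
    have hπ : (0 : ℝ) < 4 * Real.pi ^ 2 := by positivity
    have hn2 : (0 : ℝ) < (n : ℝ) ^ 2 := by positivity
    calc (4 * Real.pi ^ 2 * (n : ℝ) ^ 2)⁻¹ * ‖𝓕 (iteratedDeriv 2 f) ↑n‖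
        ≤ (4 * Real.pi ^ 2 * (n : ℝ) ^ 2)⁻¹ * C2 :=
          mul_le_mul_of_nonneg_left (hC2 _) (by positivity)
      _ = C2 / (4 * Real.pi ^ 2) * ((n : ℝ) ^ 2)⁻¹ := by
          rw [div_eq_mul_inv, mul_inv]; ring
  apply summable_of_isBigO (Real.summable_abs_int_rpow one_lt_two)
  apply Asymptotics.IsBigO.of_bound (C2 / (4 * Real.pi ^ 2))
  have hev : ∀ᶠ n : ℤ in Filter.cofinite, n ≠ 0 := by
    exact (Set.finite_singleton (0 : ℤ)).eventually_cofinite_notMem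
  filter_upwards [hev] with n hn
  rw [Real.norm_eq_abs, _root_.abs_of_nonneg (Real.rpow_nonneg (abs_nonneg _) _)]
  exact hbound n hn

/-- the Fourier (Poisson summation) expansion of
`f(z, -2k, s) = Σ_{n ∈ ℤ} (z+n)^(2k) |z+n|^(-2s)` for real `s > k + 1`. -/
theorem poisson_expansion (k : ℕ) (hk : 1 ≤ k) (s : ℝ) (hs : (k : ℝ) + 1 < s)
    (z : ℂ) (hz : 0 < z.im) :
    (∑' n : ℤ, (z + (n : ℂ)) ^ (2 * k) * ((‖z + (n : ℂ)‖ ^ (-(2 * s)) : ℝ) : ℂ))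
      = ((z.im ^ (1 + 2 * (k : ℝ) - 2 * s) : ℝ) : ℂ) *
        ∑' n : ℤ,
          (∫ t : ℝ, ((t : ℂ) + Complex.I) ^ (2 * k) * (((t ^ 2 + 1 : ℝ) ^ (-s) : ℝ) : ℂ) *
              Complex.exp (-2 * Real.pi * Complex.I * (n : ℂ) * (z.im : ℂ) * (t : ℂ))) *
            Complex.exp (2 * Real.pi * Complex.I * (n : ℂ) * (z.re : ℂ)) := by
  set x : ℝ := z.re with hxdef
  set y : ℝ := z.im with hydef
  have hy : 0 < y := hz
  set p0 : Polynomial ℂ := (X + C ((y : ℂ) * Complex.I)) ^ (2 * k) with hp0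
  have hdeg0 : p0.natDegree = 2 * k := by
    rw [hp0, Polynomial.natDegree_pow, Polynomial.natDegree_X_add_C, mul_one]
  set f := FF y p0 (-s) with hfdef
  have hb : (1 : ℝ) < 2 * s - 2 * k := by linarith
  have hO : f =O[Filter.cocompact ℝ] (fun t => |t| ^ (-(2 * s - 2 * (k : ℝ)))) := by
    have h := FF_isBigO y hy p0 (-s) (by linarith)
    have hexp : ((p0.natDegree : ℝ) + 2 * (-s)) = -(2 * s - 2 * (k : ℝ)) := by
      rw [hdeg0]; push_cast; ring
    simpa only [hexp] using h
  have hsum : Summable fun n : ℤ => 𝓕 f n :=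
    FF_fourier_summable y hy p0 (-s) (by linarith)
      (by rw [hdeg0]; push_cast; linarith)
  have poisson := Real.tsum_eq_tsum_fourier_of_rpow_decay_of_summable
    (FF_continuous y hy p0 (-s)) hb hO hsum x
  have hz' : (x : ℂ) + (y : ℂ) * Complex.I = z := Complex.re_add_im z
  -- LHS terms
  have hL : ∀ n : ℤ, (z + (n : ℂ)) ^ (2 * k) * ((‖z + (n : ℂ)‖ ^ (-(2 * s)) : ℝ) : ℂ)
      = f (x + n) := by
    intro n
    have h1 : p0.eval (((x + (n : ℤ) : ℝ)) : ℂ) = (z + (n : ℂ)) ^ (2 * k) := by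
      rw [hp0]
      simp only [Polynomial.eval_pow, Polynomial.eval_add, Polynomial.eval_X, Polynomial.eval_C]
      congr 1
      rw [← hz']
      push_cast
      ring
    have habs2 : ‖z + (n : ℂ)‖ ^ (2 : ℕ) = (x + (n : ℤ) : ℝ) ^ 2 + y ^ 2 := by
      rw [Complex.sq_norm, Complex.normSq_apply]
      simp only [Complex.add_re, Complex.add_im, Complex.intCast_re, Complex.intCast_im]
      push_cast
      ring
    have habs : ‖z + (n : ℂ)‖ ^ (-(2 * s)) = ((x + (n : ℤ) : ℝ) ^ 2 + y ^ 2) ^ (-s) := by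
      rw [show -(2 * s) = (((2 : ℕ) : ℝ)) * (-s) by push_cast; ring,
        Real.rpow_mul (norm_nonneg _), Real.rpow_natCast, habs2]
    rw [hfdef, FF, h1, habs]
  rw [tsum_congr hL, poisson]
  -- RHS terms
  have hF : ∀ n : ℤ, 𝓕 f ((n : ℤ) : ℝ) = ((y ^ (1 + 2 * (k : ℝ) - 2 * s) : ℝ) : ℂ) *
      ∫ t : ℝ, ((t : ℂ) + Complex.I) ^ (2 * k) * (((t ^ 2 + 1 : ℝ) ^ (-s) : ℝ) : ℂ) *
        Complex.exp (-2 * Real.pi * Complex.I * (n : ℂ) * (y : ℂ) * (t : ℂ)) := by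
    intro n
    rw [Real.fourier_real_eq_integral_exp_smul]
    set g : ℝ → ℂ := fun v => Complex.exp (((-2 * Real.pi * v * ((n : ℤ) : ℝ) : ℝ)) * Complex.I) • f v with hg
    have hcv : (∫ v : ℝ, g v) = y • ∫ t : ℝ, g (y * t) := by
      rw [MeasureTheory.Measure.integral_comp_mul_left g y, _root_.abs_of_pos (inv_pos.2 hy),
        smul_smul, mul_inv_cancel₀ hy.ne', one_smul]
    have hpt : ∀ t : ℝ, g (y * t) = ((y : ℂ) ^ (2 * k) * (((y ^ 2) ^ (-s) : ℝ) : ℂ)) *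
        (((t : ℂ) + Complex.I) ^ (2 * k) * (((t ^ 2 + 1 : ℝ) ^ (-s) : ℝ) : ℂ) *
          Complex.exp (-2 * Real.pi * Complex.I * (n : ℂ) * (y : ℂ) * (t : ℂ))) := by
      intro t
      have hexp : Complex.exp (((-2 * Real.pi * (y * t) * ((n : ℤ) : ℝ) : ℝ)) * Complex.I)
          = Complex.exp (-2 * Real.pi * Complex.I * (n : ℂ) * (y : ℂ) * (t : ℂ)) := by
        congr 1; push_cast; ring
      have hev : p0.eval (((y * t : ℝ)) : ℂ) = (y : ℂ) ^ (2 * k) * ((t : ℂ) + Complex.I) ^ (2 * k) := by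
        rw [hp0]
        simp only [Polynomial.eval_pow, Polynomial.eval_add, Polynomial.eval_X, Polynomial.eval_C]
        rw [← mul_pow]
        congr 1
        push_cast
        ring
      have hrp : (((y * t) ^ 2 + y ^ 2 : ℝ)) ^ (-s) = (y ^ 2) ^ (-s) * (t ^ 2 + 1) ^ (-s) := by
        rw [show ((y * t) ^ 2 + y ^ 2 : ℝ) = y ^ 2 * (t ^ 2 + 1) by ring,
          Real.mul_rpow (sq_nonneg y) (by positivity)]
      rw [hg]
      simp only [smul_eq_mul]
      rw [hfdef, FF, hev, hrp, hexp]
      push_cast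
      ring
    have hconst : (y : ℝ) * (y ^ (2 * k) * (y ^ 2) ^ (-s)) = y ^ (1 + 2 * (k : ℝ) - 2 * s) := by
      rw [← Real.rpow_natCast y (2 * k), ← Real.rpow_natCast y 2, ← Real.rpow_mul hy.le]
      nth_rewrite 1 [← Real.rpow_one y]
      rw [← Real.rpow_add hy, ← Real.rpow_add hy]
      congr 1
      push_cast
      ring
    rw [hcv]
    simp_rw [hpt]
    rw [MeasureTheory.integral_const_mul, Complex.real_smul, ← mul_assoc]
    congr 1
    rw [← hconst]
    push_cast
    ring
  have hR : ∀ n : ℤ, 𝓕 f ((n : ℤ) : ℝ) * fourier n (x : UnitAddCircle)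
      = ((y ^ (1 + 2 * (k : ℝ) - 2 * s) : ℝ) : ℂ) *
        ((∫ t : ℝ, ((t : ℂ) + Complex.I) ^ (2 * k) * (((t ^ 2 + 1 : ℝ) ^ (-s) : ℝ) : ℂ) *
            Complex.exp (-2 * Real.pi * Complex.I * (n : ℂ) * (y : ℂ) * (t : ℂ))) *
          Complex.exp (2 * Real.pi * Complex.I * (n : ℂ) * (x : ℂ))) := by
    intro n
    rw [hF n, fourier_coe_apply]
    push_cast [div_one]
    ring
  rw [tsum_congr hR, tsum_mul_left]
end

section
/- (Kummer's congruences.) Let p be an odd prime, let a ≥ 0 be an integer, and let n and m be positive integers with n ≡ m (mod (p−1)p^a) such that p−1 does not divide n (equivalently, p−1 divides neither n nor m). Then the p-adic valuation of the rational number (1 − p^{n−1})·B_n/n − (1 − p^{m−1})·B_m/m is at least a+1. -/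
open scoped Real BigOperators
open Finset

section KummerAux

open Finset

variable {p : ℕ} [hp : Fact p.Prime]

lemma kP0 : (0:ℚ) < (p:ℚ) := by exact_mod_cast hp.out.pos
lemma kP1 : (1:ℚ) < (p:ℚ) := by exact_mod_cast hp.out.one_lt

lemma knorm_ppow (k : ℕ) : padicNorm p ((p:ℚ)^k) = (p:ℚ)^(-(k:ℤ)) := by
  induction k with
  | zero => simp
  | succ k ih =>
    rw [pow_succ, padicNorm.mul, ih, padicNorm.padicNorm_p hp.out.one_lt]
    have h0 : ((p:ℚ)) ≠ 0 := by exact_mod_cast hp.out.pos.ne'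
    push_cast
    rw [neg_add, zpow_add₀ h0]
    simp [zpow_neg]

-- monotonicity of zpow for base > 1
lemma kzpow_le {s t : ℤ} (h : s ≤ t) : (p:ℚ)^s ≤ (p:ℚ)^t :=
  zpow_le_zpow_right₀ (le_of_lt kP1) h

lemma kzpow_pos (s : ℤ) : (0:ℚ) < (p:ℚ)^s := zpow_pos kP0 s

-- padicValNat p k < k for k ≥ 1
lemma kval_lt (k : ℕ) (hk : k ≠ 0) : padicValNat p k < k := by
  have h := pow_padicValNat_dvd (p := p) (n := k)
  have h2 : p ^ padicValNat p k ≤ k := Nat.le_of_dvd (Nat.pos_of_ne_zero hk) h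
  calc padicValNat p k < p ^ padicValNat p k := Nat.lt_pow_self hp.out.one_lt
    _ ≤ k := h2

-- norm of a nonzero nat ≥ p^-(large)
lemma knorm_nat_ge (k : ℕ) (hk : k ≠ 0) (b : ℕ) (hb : k ≤ b + 1) :
    (p:ℚ)^(-(b:ℤ)) ≤ padicNorm p (k:ℚ) := by
  have hkq : (k:ℚ) ≠ 0 := by exact_mod_cast hk
  rw [padicNorm.eq_zpow_of_nonzero hkq]
  apply kzpow_le
  rw [← padicValRat_of_nat]
  have : padicValNat p k < k := kval_lt k hk
  omega

lemma knorm_nat_le (k : ℕ) : padicNorm p (k:ℚ) ≤ 1 := by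
  simpa using padicNorm.of_int (p := p) (k : ℤ)

-- bound for one Faulhaber tail term, M = p^N
lemma kterm (j i N : ℕ) (hj : j ≤ i)
    (hB : padicNorm p (bernoulli j) ≤ (p:ℚ)^((j:ℤ)^2+1)) :
    padicNorm p (bernoulli j * ((i+1).choose j) * ((p^N : ℕ):ℚ)^(i+1-j) / (i+1))
      ≤ (p:ℚ)^((j:ℤ)^2+1 - N*(i+1-j) + i) := by
  have hD : (p:ℚ)^(-(i:ℤ)) ≤ padicNorm p ((i+1 : ℕ):ℚ) := knorm_nat_ge (i+1) (by omega) i (by omega)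
  have hP : padicNorm p (((p^N : ℕ):ℚ)^(i+1-j)) = (p:ℚ)^(-((N*(i+1-j) : ℕ):ℤ)) := by
    push_cast
    rw [← pow_mul]
    exact knorm_ppow _
  have hC : padicNorm p (((i+1).choose j : ℚ)) ≤ 1 := knorm_nat_le _
  rw [padicNorm.div, padicNorm.mul, padicNorm.mul, hP]
  have hDpos : (0:ℚ) < padicNorm p ((i+1:ℕ):ℚ) := lt_of_lt_of_le (kzpow_pos _) (by push_cast at hD ⊢; exact hD)
  push_cast at hD ⊢
  calc padicNorm p (bernoulli j) * padicNorm p (((i+1).choose j : ℚ)) * (p:ℚ)^(-((N*(i+1-j):ℕ):ℤ))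
        / padicNorm p ((i+1:ℚ))
      ≤ (p:ℚ)^((j:ℤ)^2+1) * 1 * (p:ℚ)^(-((N*(i+1-j):ℕ):ℤ)) / (p:ℚ)^(-(i:ℤ)) := by
        gcongr <;> first
          | exact padicNorm.nonneg _
          | exact kzpow_pos _
          | exact le_refl _
    _ = (p:ℚ)^((j:ℤ)^2+1 - (N*(i+1-j):ℕ) + i) := by
        rw [mul_one, ← zpow_add₀ (ne_of_gt kP0), ← zpow_sub₀ (ne_of_gt kP0)]
        ring_nf
    _ ≤ (p:ℚ)^((j:ℤ)^2+1 - N*(i+1-j) + i) := by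
        apply kzpow_le
        have : ((N*(i+1-j):ℕ):ℤ) = (N:ℤ)*((i:ℤ)+1-j) := by
          push_cast [Nat.cast_sub (by omega : j ≤ i+1)]; ring
        omega

lemma kbern : ∀ i : ℕ, padicNorm p (bernoulli i) ≤ (p:ℚ)^((i:ℤ)^2+1) := by
  intro i
  induction i using Nat.strong_induction_on with
  | _ i IH =>
  rcases Nat.eq_zero_or_pos i with rfl | hi
  · simp only [bernoulli_zero, padicNorm.one]
    exact le_trans (by norm_num) (kzpow_le (by norm_num : (0:ℤ) ≤ 0^2+1))
  have key := sum_range_pow p i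
  rw [Finset.sum_range_succ] at key
  have hi1 : ((i:ℚ)+1) ≠ 0 := by positivity
  have htop : bernoulli i * ((i+1).choose i) * (p:ℚ)^(i+1-i)/(i+1) = bernoulli i * p := by
    rw [Nat.choose_succ_self_right]
    have : i + 1 - i = 1 := by omega
    rw [this, pow_one]
    field_simp
    push_cast; ring
  rw [htop] at key
  have hexp : bernoulli i * p = (∑ k ∈ Finset.range p, (k:ℚ)^i)
      - ∑ j ∈ Finset.range i, bernoulli j * ((i+1).choose j) * (p:ℚ)^(i+1-j)/(i+1) := by
    linarith [key]
  have hsum1 : padicNorm p (∑ k ∈ Finset.range p, (k:ℚ)^i) ≤ (p:ℚ)^((i:ℤ)^2-i) := by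
    have : (∑ k ∈ Finset.range p, (k:ℚ)^i) = ((∑ k ∈ Finset.range p, k^i : ℕ) : ℚ) := by push_cast; ring
    rw [this]
    refine le_trans (knorm_nat_le _) ?_
    have h10 : (1:ℚ) = (p:ℚ)^(0:ℤ) := by norm_num
    rw [h10]
    apply kzpow_le
    nlinarith [(by exact_mod_cast hi : (1:ℤ) ≤ i)]
  have hsum2 : padicNorm p (∑ j ∈ Finset.range i, bernoulli j * ((i+1).choose j) * (p:ℚ)^(i+1-j)/(i+1))
      ≤ (p:ℚ)^((i:ℤ)^2-i) := by
    refine padicNorm.sum_le' (fun j hj => ?_) (le_of_lt (kzpow_pos _))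
    rw [Finset.mem_range] at hj
    have h1 := kterm (p := p) j i 1 (le_of_lt hj) (IH j hj)
    simp only [pow_one] at h1
    refine le_trans (le_of_eq ?_) (le_trans h1 (kzpow_le ?_))
    · norm_num
    · have hji : (j:ℤ) < (i:ℤ) := by exact_mod_cast hj
      push_cast
      nlinarith [mul_nonneg (by omega : (0:ℤ) ≤ (i:ℤ)-1-j) (by omega : (0:ℤ) ≤ (i:ℤ)+j)]
  have hnum : padicNorm p (bernoulli i * p) ≤ (p:ℚ)^((i:ℤ)^2-i) := by
    rw [hexp]
    exact le_trans (padicNorm.sub (p := p)) (max_le hsum1 hsum2)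
  have : padicNorm p (bernoulli i * p) = padicNorm p (bernoulli i) * (p:ℚ)⁻¹ := by
    rw [padicNorm.mul, padicNorm.padicNorm_p hp.out.one_lt]
  rw [this] at hnum
  have hfin : padicNorm p (bernoulli i) ≤ (p:ℚ)^((i:ℤ)^2-i) * p := by
    have := mul_le_mul_of_nonneg_right hnum (le_of_lt (kP0 (p := p)))
    rwa [mul_assoc, inv_mul_cancel₀ (ne_of_gt (kP0 (p := p))), mul_one] at this
  refine le_trans hfin ?_
  have : (p:ℚ)^((i:ℤ)^2-i) * p = (p:ℚ)^((i:ℤ)^2-i+1) := by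
    rw [zpow_add₀ (ne_of_gt kP0)]; simp
  rw [this]
  apply kzpow_le
  omega


lemma ksq0pow {R : Type*} [CommRing R] (x t : R) (h : t*t = 0) :
    ∀ n : ℕ, (x+t)^n = x^n + n * x^(n-1) * t := by
  intro n
  induction n with
  | zero => simp
  | succ k ih =>
    rw [pow_succ, ih]
    rcases Nat.eq_zero_or_pos k with rfl | hk
    · push_cast; ring
    · have hx : x^(k-1) * x = x^k := by
        rw [← pow_succ]; congr 1; omega
      have hk1 : k + 1 - 1 = k := by omega
      rw [hk1]
      push_cast
      calc (x^k + k * x^(k-1)*t) * (x + t)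
          = x^(k+1) + k*(x^(k-1)*x)*t + x^k*t + k*x^(k-1)*(t*t) := by ring
        _ = x^(k+1) + (k+1) * x^k * t := by rw [h, hx]; ring

lemma kinv (c M : ℕ) (hM : 0 < M) (hc : Nat.Coprime c M) :
    ∃ d, (c * d) % M = 1 % M := by
  haveI : NeZero M := ⟨hM.ne'⟩
  refine ⟨((c : ZMod M)⁻¹).val, ?_⟩
  have h1 : ((c * ((c : ZMod M)⁻¹).val : ℕ) : ZMod M) = ((1:ℕ) : ZMod M) := by
    push_cast
    rw [ZMod.natCast_val, ZMod.cast_id]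
    exact ZMod.coe_mul_inv_eq_one c hc
  exact (ZMod.natCast_eq_natCast_iff _ _ _).mp h1

lemma kperm {R : Type*} [AddCommMonoid R] (c M : ℕ) (hM : 0 < M) (hc : Nat.Coprime c M)
    (f : ℕ → R) :
    ∑ j ∈ range M, f ((c * j) % M) = ∑ j ∈ range M, f j := by
  obtain ⟨d, hd⟩ := kinv c M hM hc
  refine Finset.sum_nbij' (fun j => (c * j) % M) (fun j => (d * j) % M) ?_ ?_ ?_ ?_ ?_
  · intro a ha; exact mem_range.mpr (Nat.mod_lt _ hM)
  · intro a ha; exact mem_range.mpr (Nat.mod_lt _ hM)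
  · intro a ha
    rw [mem_range] at ha
    show (d * (c * a % M)) % M = a
    rw [Nat.mul_mod, Nat.mod_mod_of_dvd _ dvd_rfl, ← Nat.mul_mod]
    have h1 : d * (c * a) = (c * d) * a := by ring
    rw [h1, Nat.mul_mod, hd, ← Nat.mul_mod, one_mul, Nat.mod_eq_of_lt ha]
  · intro a ha
    rw [mem_range] at ha
    show (c * (d * a % M)) % M = a
    rw [Nat.mul_mod, Nat.mod_mod_of_dvd _ dvd_rfl, ← Nat.mul_mod]
    have h1 : c * (d * a) = (c * d) * a := by ring
    rw [h1, Nat.mul_mod, hd, ← Nat.mul_mod, one_mul, Nat.mod_eq_of_lt ha]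
  · intro a ha; rfl

def kq (c p N j : ℕ) : ℕ := c * j / p ^ N
def kA (c p n N : ℕ) : ℤ := ∑ j ∈ range (p^N), (j:ℤ)^(n-1) * (kq c p N j : ℤ)
def kU (c p n N : ℕ) : ℤ :=
  ∑ j ∈ (range (p^N)).filter (fun j => ¬ p ∣ j), (j:ℤ)^(n-1) * (kq c p N j : ℤ)

variable {p : ℕ} [hp : Fact p.Prime]

lemma kC1 (c n N : ℕ) (hc : Nat.Coprime c p) :
    ((p:ℤ))^(2*N) ∣ ((c:ℤ)^n - 1) * (∑ j ∈ range (p^N), (j:ℤ)^n)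
      - n * (c:ℤ)^(n-1) * (p:ℤ)^N * kA c p n N := by
  haveI : NeZero (p^(2*N)) := ⟨pow_ne_zero _ hp.out.pos.ne'⟩
  have hM : 0 < p^N := pow_pos hp.out.pos N
  rw [show ((p:ℤ))^(2*N) = ((p^(2*N) : ℕ) : ℤ) by push_cast; ring,
    ← ZMod.intCast_zmod_eq_zero_iff_dvd]
  set R := ZMod (p^(2*N)) with hR
  push_cast [kA]
  have hpp : (p:R)^N * (p:R)^N = 0 := by
    rw [← pow_add, show N + N = 2*N by ring, ← Nat.cast_pow, ZMod.natCast_self]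
  have key : ∀ j : ℕ, ((c:R)*j)^n = (((c*j) % p^N : ℕ) : R)^n
      + n * ((c:R)*j)^(n-1) * ((p:R)^N * (kq c p N j : R)) := by
    intro j
    have hdm : (p^N) * kq c p N j + (c*j) % p^N = c * j := Nat.div_add_mod (c*j) (p^N)
    set t : R := (p:R)^N * (kq c p N j : R) with hT
    have ht : t * t = 0 := by
      rw [hT]
      calc (p:R)^N * (kq c p N j : R) * ((p:R)^N * (kq c p N j : R))
          = ((p:R)^N * (p:R)^N) * ((kq c p N j : R) * (kq c p N j : R)) := by ring
        _ = 0 := by rw [hpp, zero_mul]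
    have hsplit : ((c:R)*j) = (((c*j) % p^N : ℕ) : R) + t := by
      rw [hT]
      have h3 := congrArg (fun x : ℕ => (x : R)) hdm
      push_cast at h3
      rw [← Nat.cast_mul c j]; conv_lhs => rw [← hdm]
      rw [Nat.cast_add, Nat.cast_mul, Nat.cast_pow]; ring
    set r : R := (((c*j) % p^N : ℕ) : R) with hr
    rw [hsplit, ksq0pow r t ht n]
    congr 1
    symm
    calc (n:R) * (r + t)^(n-1) * t
        = n * (r^(n-1) + ((n-1 : ℕ):R)*r^(n-1-1)*t) * t := by rw [ksq0pow r t ht (n-1)]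
      _ = n * r^(n-1) * t + (n*((n-1 : ℕ):R)*r^(n-1-1))*(t*t) := by ring
      _ = n * r^(n-1) * t := by rw [ht]; ring
  have hsum := Finset.sum_congr rfl (fun j (_ : j ∈ range (p^N)) => key j)
  have e1 : ∑ j ∈ range (p^N), ((c:R)*(j:R))^n = (c:R)^n * ∑ j ∈ range (p^N), (j:R)^n := by
    rw [Finset.mul_sum]; exact sum_congr rfl fun j _ => by rw [mul_pow]
  have e2 : ∑ j ∈ range (p^N), (((c*j) % p^N : ℕ) : R)^n = ∑ j ∈ range (p^N), (j:R)^n :=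
    kperm c (p^N) hM (hc.pow_right N) (fun x => ((x:ℕ):R)^n)
  have e3 : ∑ j ∈ range (p^N), ((n:R) * ((c:R)*(j:R))^(n-1) * ((p:R)^N * (kq c p N j : R)))
      = (n:R) * (c:R)^(n-1) * (p:R)^N * ∑ j ∈ range (p^N), (j:R)^(n-1) * (kq c p N j : R) := by
    rw [Finset.mul_sum]
    exact sum_congr rfl fun j _ => by rw [mul_pow]; ring
  rw [Finset.sum_add_distrib, e1, e2, e3] at hsum
  linear_combination hsum


lemma kAsplit (c n N : ℕ) (hN : 1 ≤ N) :
    kA c p n N = kU c p n N + (p:ℤ)^(n-1) * kA c p n (N-1) := by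
  have hp0 : 0 < p := hp.out.pos
  have hNN : p^N = p * p^(N-1) := by
    conv_lhs => rw [show N = 1 + (N-1) by omega]
    rw [pow_add, pow_one]
  rw [kA, ← Finset.sum_filter_add_sum_filter_not (range (p^N)) (fun j => p ∣ j)]
  have hmul : ∑ j ∈ (range (p^N)).filter (fun j => p ∣ j), (j:ℤ)^(n-1) * (kq c p N j : ℤ)
      = (p:ℤ)^(n-1) * kA c p n (N-1) := by
    rw [kA, Finset.mul_sum]
    refine (Finset.sum_nbij' (fun i => p * i) (fun j => j / p) ?_ ?_ ?_ ?_ ?_).symm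
    · intro i hi
      rw [mem_range] at hi
      rw [mem_filter, mem_range]
      refine ⟨?_, ⟨i, rfl⟩⟩
      rw [hNN]
      exact (Nat.mul_lt_mul_left hp0).mpr hi
    · intro j hj
      rw [mem_filter, mem_range] at hj
      rw [mem_range]
      rw [Nat.div_lt_iff_lt_mul hp0]
      calc j < p^N := hj.1
        _ = p^(N-1) * p := by rw [hNN]; ring
    · intro i hi
      exact Nat.mul_div_cancel_left i hp0
    · intro j hj
      rw [mem_filter] at hj
      exact Nat.mul_div_cancel' hj.2
    · intro i hi
      show (p:ℤ)^(n-1) * ((i:ℤ)^(n-1) * (kq c p (N-1) i : ℤ)) = ((p*i : ℕ):ℤ)^(n-1) * (kq c p N (p*i) : ℤ)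
      have hq : kq c p N (p*i) = kq c p (N-1) i := by
        rw [kq, kq, hNN, show c*(p*i) = p*(c*i) by ring, Nat.mul_div_mul_left _ _ hp0]
      rw [hq]
      push_cast
      rw [mul_pow]
      ring
  rw [hmul, kU]
  ring

lemma keuler (u e1 e2 a : ℕ) (hu : Nat.Coprime u p)
    (he : e1 ≡ e2 [MOD (p-1)*p^a]) : u^e1 ≡ u^e2 [MOD p^(a+1)] := by
  have hφ : Nat.totient (p^(a+1)) = p^a * (p-1) := by
    rw [Nat.totient_prime_pow hp.out (by omega : 0 < a+1)]
    congr 1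
  have heu : u^((p-1)*p^a) ≡ 1 [MOD p^(a+1)] := by
    have := Nat.ModEq.pow_totient (hu.pow_right (a+1))
    rwa [hφ, mul_comm (p^a) (p-1)] at this
  -- wlog e1 ≤ e2
  rcases le_total e1 e2 with h | h
  · obtain ⟨k, hk⟩ := (Nat.modEq_iff_dvd' h).mp he
    have he2 : e2 = e1 + (p-1)*p^a * k := by omega
    calc u^e1 = u^e1 * 1 := by ring
      _ ≡ u^e1 * (u^((p-1)*p^a))^k [MOD p^(a+1)] :=
        Nat.ModEq.mul_left _ (by simpa using (heu.pow k).symm)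
      _ = u^(e1 + (p-1)*p^a*k) := by rw [← pow_mul, ← pow_add]
      _ = u^e2 := by rw [← he2]
  · obtain ⟨k, hk⟩ := (Nat.modEq_iff_dvd' h).mp he.symm
    have he1 : e1 = e2 + (p-1)*p^a * k := by omega
    calc u^e1 = u^(e2 + (p-1)*p^a*k) := by rw [← he1]
      _ = u^e2 * (u^((p-1)*p^a))^k := by rw [← pow_mul, ← pow_add]
      _ ≡ u^e2 * 1 [MOD p^(a+1)] := Nat.ModEq.mul_left _ (by simpa using heu.pow k)
      _ = u^e2 := by ring

lemma kmodeq_int (x y M : ℕ) (h : x ≡ y [MOD M]) : (M:ℤ) ∣ (x:ℤ) - (y:ℤ) :=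
  Int.ModEq.dvd (Int.natCast_modEq_iff.mpr h).symm

lemma kUcong (c n m N a : ℕ) (hc : Nat.Coprime c p) (hn : 0 < n) (hm : 0 < m)
    (hcong : n ≡ m [MOD (p-1)*p^a]) :
    ((p:ℤ))^(a+1) ∣ (c:ℤ)^(n-1) * kU c p n N - (c:ℤ)^(m-1) * kU c p m N := by
  have hc1 : n - 1 ≡ m - 1 [MOD (p-1)*p^a] := by
    rcases le_total n m with h | h
    · obtain ⟨k, hk⟩ := (Nat.modEq_iff_dvd' h).mp hcong
      exact (Nat.modEq_iff_dvd' (by omega)).mpr ⟨k, by omega⟩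
    · obtain ⟨k, hk⟩ := (Nat.modEq_iff_dvd' h).mp hcong.symm
      exact ((Nat.modEq_iff_dvd' (by omega)).mpr ⟨k, by omega⟩).symm
  rw [kU, kU, Finset.mul_sum, Finset.mul_sum, ← Finset.sum_sub_distrib]
  apply Finset.dvd_sum
  intro j hj
  rw [mem_filter] at hj
  have hcj : Nat.Coprime (c*j) p := Nat.Coprime.mul hc
    ((Nat.Prime.coprime_iff_not_dvd hp.out).mpr hj.2).symm
  have hd := kmodeq_int _ _ _ (keuler (p := p) (c*j) (n-1) (m-1) a hcj hc1)
  have e1 : (c:ℤ)^(n-1) * ((j:ℤ)^(n-1) * (kq c p N j : ℤ))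
      - (c:ℤ)^(m-1) * ((j:ℤ)^(m-1) * (kq c p N j : ℤ))
      = (((c*j : ℕ):ℤ)^(n-1) - ((c*j : ℕ):ℤ)^(m-1)) * (kq c p N j : ℤ) := by
    push_cast; ring
  rw [e1]
  apply Dvd.dvd.mul_right
  have : (((c*j)^(n-1) : ℕ):ℤ) - (((c*j)^(m-1) : ℕ):ℤ)
      = ((c*j : ℕ):ℤ)^(n-1) - ((c*j : ℕ):ℤ)^(m-1) := by push_cast; ring
  rw [← this]
  have h2 : ((p^(a+1) : ℕ):ℤ) = (p:ℤ)^(a+1) := by push_cast; ring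
  rw [← h2]
  exact hd

lemma kprim : ∃ c : ℕ, Nat.Coprime c p ∧
    ∀ k : ℕ, (¬ (p-1) ∣ k) → ¬ (p:ℤ) ∣ ((c:ℤ)^k - 1) := by
  obtain ⟨g, hg⟩ := IsCyclic.exists_generator (α := (ZMod p)ˣ)
  have hcard : orderOf g = p - 1 := by
    rw [orderOf_eq_card_of_forall_mem_zpowers hg, Nat.card_eq_fintype_card,
      ZMod.card_units_eq_totient, Nat.totient_prime hp.out]
  refine ⟨((g : ZMod p)).val, ?_, ?_⟩
  · rw [Nat.coprime_comm, (Nat.Prime.coprime_iff_not_dvd hp.out)]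
    intro hdvd
    have h0 : (((g : ZMod p)).val : ZMod p) = 0 := (ZMod.natCast_eq_zero_iff _ _).mpr hdvd
    rw [ZMod.natCast_val, ZMod.cast_id] at h0
    exact g.ne_zero h0
  · intro k hk hdvd
    apply hk
    have h0 : (((((g : ZMod p)).val : ℤ)^k - 1 : ℤ) : ZMod p) = 0 :=
      (ZMod.intCast_zmod_eq_zero_iff_dvd _ _).mpr hdvd
    push_cast at h0
    rw [ZMod.natCast_val, ZMod.cast_id] at h0
    have hg1 : (g : ZMod p)^k = 1 := by linear_combination h0
    have : g^k = 1 := by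
      ext
      push_cast
      exact hg1
    rw [← hcard]
    exact orderOf_dvd_of_pow_eq_one this

lemma kfaul (n N : ℕ) (hn : 0 < n) :
    padicNorm p ((∑ k ∈ range (p^N), (k:ℚ)^n) - ((p^N : ℕ):ℚ) * bernoulli n)
      ≤ (p:ℚ)^((n:ℤ)^2+n+2 - 2*N) := by
  have key := sum_range_pow (p^N) n
  rw [Finset.sum_range_succ] at key
  have hn1 : ((n:ℚ)+1) ≠ 0 := by positivity
  have htop : bernoulli n * ((n+1).choose n : ℚ) * ((p^N : ℕ):ℚ)^(n+1-n)/((n:ℚ)+1)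
      = ((p^N : ℕ):ℚ) * bernoulli n := by
    rw [Nat.choose_succ_self_right]
    have h1 : n + 1 - n = 1 := by omega
    rw [h1, pow_one]
    field_simp
    push_cast; ring
  have hexp : (∑ k ∈ range (p^N), (k:ℚ)^n) - ((p^N : ℕ):ℚ) * bernoulli n
      = ∑ j ∈ range n, bernoulli j * ((n+1).choose j : ℚ) * ((p^N : ℕ):ℚ)^(n+1-j)/((n:ℚ)+1) := by
    rw [key]
    push_cast at htop ⊢
    rw [htop]
    ring
  rw [hexp]
  refine padicNorm.sum_le' (fun j hj => ?_) (le_of_lt (kzpow_pos _))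
  rw [mem_range] at hj
  refine le_trans (kterm j n N (le_of_lt hj) (kbern j)) (kzpow_le ?_)
  have hji : (j:ℤ) < (n:ℤ) := by exact_mod_cast hj
  have h2 : (N:ℤ)*((n:ℤ)+1-(j:ℤ)) ≥ (N:ℤ)*2 := by
    apply mul_le_mul_of_nonneg_left (by omega) (by positivity)
  nlinarith [mul_nonneg (by omega : (0:ℤ) ≤ (n:ℤ)-1-j) (by omega : (0:ℤ) ≤ (n:ℤ)+j)]
variable {p : ℕ} [hp : Fact p.Prime]

lemma kdvd_norm (k : ℕ) (z : ℤ) (h : (p:ℤ)^k ∣ z) :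
    padicNorm p (z:ℚ) ≤ (p:ℚ)^(-(k:ℤ)) := by
  have h2 : ((p^k : ℕ) : ℤ) ∣ z := by push_cast; exact h
  exact_mod_cast padicNorm.dvd_iff_norm_le.mp h2

lemma ktri {t : ℚ} {u v w : ℚ} (h1 : padicNorm p (u - v) ≤ t) (h2 : padicNorm p (v - w) ≤ t) :
    padicNorm p (u - w) ≤ t := by
  have h3 : u - w = (u - v) + (v - w) := by ring
  rw [h3]
  exact le_trans (padicNorm.nonarchimedean (p := p)) (max_le h1 h2)

lemma kint_le_one (z : ℤ) : padicNorm p (z:ℚ) ≤ 1 := padicNorm.of_int z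

lemma kC2 (c n N : ℕ) (hc : Nat.Coprime c p) (hn : 0 < n) :
    padicNorm p (((c:ℚ)^n - 1) * bernoulli n - (n:ℚ) * (c:ℚ)^(n-1) * ((kA c p n N : ℤ) : ℚ))
      ≤ (p:ℚ)^((n:ℤ)^2+n+2 - N) := by
  have hp0 : ((p:ℚ)) ≠ 0 := ne_of_gt kP0
  have hppow : ((p:ℚ))^N ≠ 0 := pow_ne_zero _ hp0
  set S : ℚ := ∑ j ∈ range (p^N), (j:ℚ)^n with hS
  set X1 : ℚ := ((c:ℚ)^n - 1) * S - (n:ℚ) * (c:ℚ)^(n-1) * (p:ℚ)^N * ((kA c p n N : ℤ) : ℚ) with hX1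
  set X2 : ℚ := ((c:ℚ)^n - 1) * (S - ((p^N : ℕ):ℚ) * bernoulli n) with hX2
  have hX1norm : padicNorm p X1 ≤ (p:ℚ)^(-(2*N : ℕ) : ℤ) := by
    have h := kC1 (p := p) c n N hc
    have hcast : ((((c:ℤ)^n - 1) * (∑ j ∈ range (p^N), (j:ℤ)^n)
        - n * (c:ℤ)^(n-1) * (p:ℤ)^N * kA c p n N : ℤ) : ℚ) = X1 := by
      push_cast [hX1, hS]
      ring
    rw [← hcast]
    exact kdvd_norm _ _ h
  have hX2norm : padicNorm p X2 ≤ (p:ℚ)^((n:ℤ)^2+n+2 - 2*N) := by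
    rw [hX2, padicNorm.mul]
    have hc1 : padicNorm p ((c:ℚ)^n - 1) ≤ 1 := by
      have := kint_le_one (p := p) ((c:ℤ)^n - 1)
      push_cast at this
      exact this
    calc padicNorm p ((c:ℚ)^n - 1) * padicNorm p (S - ((p^N : ℕ):ℚ) * bernoulli n)
        ≤ 1 * ((p:ℚ)^((n:ℤ)^2+n+2 - 2*N)) := by
          apply mul_le_mul hc1 (kfaul n N hn) (padicNorm.nonneg _) (by norm_num)
      _ = (p:ℚ)^((n:ℤ)^2+n+2 - 2*N) := by ring
  have hkey : ((c:ℚ)^n - 1) * bernoulli n - (n:ℚ) * (c:ℚ)^(n-1) * ((kA c p n N : ℤ) : ℚ)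
      = (X1 - X2) / (p:ℚ)^N := by
    rw [hX1, hX2, eq_div_iff hppow]
    push_cast
    ring
  rw [hkey, padicNorm.div]
  rw [knorm_ppow]
  rw [div_le_iff₀ (kzpow_pos _)]
  calc padicNorm p (X1 - X2) ≤ (p:ℚ)^((n:ℤ)^2+n+2 - 2*N) :=
        le_trans (padicNorm.sub (p := p)) (max_le (le_trans hX1norm (kzpow_le (by push_cast; nlinarith [sq_nonneg (n:ℤ)]))) hX2norm)
    _ = (p:ℚ)^((n:ℤ)^2+n+2 - N) * (p:ℚ)^(-(N:ℤ)) := by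
        rw [← zpow_add₀ hp0]; congr 1; push_cast; ring

lemma kC3 (c n N : ℕ) (hc : Nat.Coprime c p) (hn : 0 < n) (hN : 1 ≤ N) :
    padicNorm p (((c:ℚ)^n - 1) * ((1 - (p:ℚ)^(n-1)) * bernoulli n)
        - (n:ℚ) * (c:ℚ)^(n-1) * ((kU c p n N : ℤ) : ℚ))
      ≤ (p:ℚ)^((n:ℤ)^2+n+3 - N) := by
  have hp0 : ((p:ℚ)) ≠ 0 := ne_of_gt kP0
  have hsplit : ((kU c p n N : ℤ) : ℚ)
      = ((kA c p n N : ℤ) : ℚ) - (p:ℚ)^(n-1) * ((kA c p n (N-1) : ℤ) : ℚ) := by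
    have := kAsplit (p := p) c n N hN
    have h2 := congrArg (fun z : ℤ => (z : ℚ)) this
    push_cast at h2
    rw [h2]; ring
  have hkey : ((c:ℚ)^n - 1) * ((1 - (p:ℚ)^(n-1)) * bernoulli n)
        - (n:ℚ) * (c:ℚ)^(n-1) * ((kU c p n N : ℤ) : ℚ)
      = (((c:ℚ)^n - 1) * bernoulli n - (n:ℚ) * (c:ℚ)^(n-1) * ((kA c p n N : ℤ) : ℚ))
        - (p:ℚ)^(n-1) * (((c:ℚ)^n - 1) * bernoulli n
            - (n:ℚ) * (c:ℚ)^(n-1) * ((kA c p n (N-1) : ℤ) : ℚ)) := by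
    rw [hsplit]; ring
  rw [hkey]
  refine le_trans (padicNorm.sub (p := p)) (max_le ?_ ?_)
  · exact le_trans (kC2 c n N hc hn) (kzpow_le (by omega))
  · rw [padicNorm.mul]
    calc padicNorm p ((p:ℚ)^(n-1)) * padicNorm p (((c:ℚ)^n - 1) * bernoulli n
            - (n:ℚ) * (c:ℚ)^(n-1) * ((kA c p n (N-1) : ℤ) : ℚ))
        ≤ 1 * (p:ℚ)^((n:ℤ)^2+n+2 - (N-1 : ℕ)) := by
          apply mul_le_mul ?_ (kC2 c n (N-1) hc hn) (padicNorm.nonneg _) (by norm_num)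
          rw [knorm_ppow]
          have h1 : (1:ℚ) = (p:ℚ)^(0:ℤ) := by norm_num
          rw [h1]
          exact kzpow_le (by omega)
      _ ≤ (p:ℚ)^((n:ℤ)^2+n+3 - N) := by
          rw [one_mul]
          apply kzpow_le
          have : ((N-1 : ℕ) : ℤ) = (N:ℤ) - 1 := by omega
          omega

lemma kC4 (c n N : ℕ) (hc : Nat.Coprime c p) (hn : 0 < n) (hN : 1 ≤ N) :
    padicNorm p (((c:ℚ)^n - 1) * ((1 - (p:ℚ)^(n-1)) * bernoulli n) / n
        - (c:ℚ)^(n-1) * ((kU c p n N : ℤ) : ℚ))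
      ≤ (p:ℚ)^((n:ℤ)^2+2*n+2 - N) := by
  have hn0 : ((n:ℚ)) ≠ 0 := by positivity
  have hkey : ((c:ℚ)^n - 1) * ((1 - (p:ℚ)^(n-1)) * bernoulli n) / n
        - (c:ℚ)^(n-1) * ((kU c p n N : ℤ) : ℚ)
      = (((c:ℚ)^n - 1) * ((1 - (p:ℚ)^(n-1)) * bernoulli n)
          - (n:ℚ) * (c:ℚ)^(n-1) * ((kU c p n N : ℤ) : ℚ)) / n := by
    field_simp
  rw [hkey, padicNorm.div]
  rw [div_le_iff₀ (lt_of_lt_of_le (kzpow_pos _) (knorm_nat_ge n (by omega) (n-1) (by omega)))]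
  calc padicNorm p (((c:ℚ)^n - 1) * ((1 - (p:ℚ)^(n-1)) * bernoulli n)
          - (n:ℚ) * (c:ℚ)^(n-1) * ((kU c p n N : ℤ) : ℚ))
      ≤ (p:ℚ)^((n:ℤ)^2+n+3 - N) := kC3 c n N hc hn hN
    _ = (p:ℚ)^((n:ℤ)^2+2*n+2 - N) * (p:ℚ)^(-((n-1 : ℕ):ℤ)) := by
        rw [← zpow_add₀ (ne_of_gt kP0)]
        congr 1
        have : ((n-1 : ℕ) : ℤ) = (n:ℤ) - 1 := by omega
        omega
    _ ≤ (p:ℚ)^((n:ℤ)^2+2*n+2 - N) * padicNorm p ((n:ℚ)) := by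
        apply mul_le_mul_of_nonneg_left (knorm_nat_ge n (by omega) (n-1) (by omega)) (le_of_lt (kzpow_pos _))

end KummerAux

/-- Kummer's congruences: for an odd prime `p` and positive integers
`n ≡ m (mod (p-1)p^a)` with `(p-1) ∤ n`, the rational number
`(1 - p^(n-1)) Bₙ/n - (1 - p^(m-1)) Bₘ/m` has `p`-adic valuation at least `a + 1`,
i.e. `p`-adic norm at most `p^(-(a+1))`.  Here `bernoulli` is Mathlib's Bernoulli number
with the convention `Σ Bₙ tⁿ/n! = t/(eᵗ - 1)`. -/
theorem kummer_congruences (p : ℕ) (hp : p.Prime) (hodd : Odd p) (a : ℕ)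
    (n m : ℕ) (hn : 0 < n) (hm : 0 < m)
    (hcong : n ≡ m [MOD (p - 1) * p ^ a]) (hnd : ¬ (p - 1) ∣ n) :
    padicNorm p ((1 - (p : ℚ) ^ (n - 1)) * bernoulli n / n
        - (1 - (p : ℚ) ^ (m - 1)) * bernoulli m / m)
      ≤ (p : ℚ) ^ (-(a + 1 : ℤ)) := by
  haveI : Fact p.Prime := ⟨hp⟩
  obtain ⟨c, hc, hcprim⟩ := kprim (p := p)
  have hndm : ¬ (p - 1) ∣ m := by
    intro h
    apply hnd
    have h1 : n ≡ m [MOD p-1] := Nat.ModEq.of_dvd (dvd_mul_right _ _) hcong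
    have h2 : n ≡ 0 [MOD p-1] := h1.trans (Nat.modEq_zero_iff_dvd.mpr h)
    exact Nat.modEq_zero_iff_dvd.mp h2
  set N : ℕ := a + 1 + (n^2 + 2*n + 2) + (m^2 + 2*m + 2) with hN
  have hN1 : 1 ≤ N := by omega
  set T : ℚ := (p:ℚ)^(-(a + 1 : ℤ)) with hT
  have hT1 : T ≤ 1 := by
    rw [hT]
    calc (p:ℚ)^(-(a + 1 : ℤ)) ≤ (p:ℚ)^(0:ℤ) := kzpow_le (by omega)
      _ = 1 := zpow_zero _
  have hswap : ∀ u v : ℚ, padicNorm p (u - v) = padicNorm p (v - u) := fun u v => by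
    rw [show u - v = -(v-u) by ring, padicNorm.neg]
  set yn : ℚ := (1 - (p:ℚ)^(n-1)) * bernoulli n / n with hyn
  set ym : ℚ := (1 - (p:ℚ)^(m-1)) * bernoulli m / m with hym
  set xn : ℚ := ((c:ℚ)^n - 1) * yn with hxn
  set xm : ℚ := ((c:ℚ)^m - 1) * ym with hxm
  have hxneq : xn = ((c:ℚ)^n - 1) * ((1 - (p:ℚ)^(n-1)) * bernoulli n) / n := by
    rw [hxn, hyn]; ring
  have hxmeq : xm = ((c:ℚ)^m - 1) * ((1 - (p:ℚ)^(m-1)) * bernoulli m) / m := by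
    rw [hxm, hym]; ring
  have hNZ : (N:ℤ) = (a:ℤ) + 1 + ((n:ℤ)^2 + 2*n + 2) + ((m:ℤ)^2 + 2*m + 2) := by
    rw [hN]; push_cast; ring
  have hGn : ((n:ℤ)^2+2*(n:ℤ)+2 - (N:ℤ) : ℤ) ≤ -((a:ℤ) + 1) := by
    rw [hNZ]; nlinarith [sq_nonneg (m:ℤ)]
  have hGm : ((m:ℤ)^2+2*(m:ℤ)+2 - (N:ℤ) : ℤ) ≤ -((a:ℤ) + 1) := by
    rw [hNZ]; nlinarith [sq_nonneg (n:ℤ)]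
  have h1 : padicNorm p (xn - (c:ℚ)^(n-1) * ((kU c p n N : ℤ):ℚ)) ≤ T := by
    rw [hxneq, hT]
    exact le_trans (kC4 c n N hc hn hN1) (kzpow_le hGn)
  have h2 : padicNorm p (xm - (c:ℚ)^(m-1) * ((kU c p m N : ℤ):ℚ)) ≤ T := by
    rw [hxmeq, hT]
    exact le_trans (kC4 c m N hc hm hN1) (kzpow_le hGm)
  have h3 : padicNorm p ((c:ℚ)^(n-1) * ((kU c p n N : ℤ):ℚ)
      - (c:ℚ)^(m-1) * ((kU c p m N : ℤ):ℚ)) ≤ T := by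
    have hd := kUcong (p := p) c n m N a hc hn hm hcong
    have hcast : (((c:ℤ)^(n-1) * kU c p n N - (c:ℤ)^(m-1) * kU c p m N : ℤ) : ℚ)
        = (c:ℚ)^(n-1) * ((kU c p n N : ℤ):ℚ) - (c:ℚ)^(m-1) * ((kU c p m N : ℤ):ℚ) := by
      push_cast; ring
    rw [← hcast, hT]
    exact le_trans (kdvd_norm (a+1) _ hd) (le_of_eq (by norm_cast))
  have h4 : padicNorm p (xn - xm) ≤ T := by
    refine ktri (ktri h1 h3) ?_
    rw [hswap]
    exact h2
  have hint : padicNorm p ((c:ℚ)^(m-1) * ((kU c p m N : ℤ):ℚ)) ≤ 1 := by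
    have hcast : (((c:ℤ)^(m-1) * kU c p m N : ℤ) : ℚ)
        = (c:ℚ)^(m-1) * ((kU c p m N : ℤ):ℚ) := by push_cast; ring
    rw [← hcast]
    exact kint_le_one _
  have h5 : padicNorm p xm ≤ 1 := by
    have he : xm = (xm - (c:ℚ)^(m-1) * ((kU c p m N : ℤ):ℚ))
        + (c:ℚ)^(m-1) * ((kU c p m N : ℤ):ℚ) := by ring
    rw [he]
    exact le_trans (padicNorm.nonarchimedean (p := p)) (max_le (le_trans h2 hT1) hint)
  have h7 : padicNorm p ((c:ℚ)^n - 1) = 1 := by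
    have h := (padicNorm.int_eq_one_iff (p := p) ((c:ℤ)^n - 1)).mpr (hcprim n hnd)
    push_cast at h
    exact h
  have h8 : padicNorm p ((c:ℚ)^m - 1) = 1 := by
    have h := (padicNorm.int_eq_one_iff (p := p) ((c:ℤ)^m - 1)).mpr (hcprim m hndm)
    push_cast at h
    exact h
  have hym1 : padicNorm p ym ≤ 1 := by
    have he : padicNorm p xm = padicNorm p ym := by
      rw [hxm, padicNorm.mul, h8, one_mul]
    rw [← he]
    exact h5
  have h6 : padicNorm p ((c:ℚ)^m - (c:ℚ)^n) ≤ T := by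
    have hd := kmodeq_int (c^m) (c^n) (p^(a+1)) (keuler (p := p) c m n a hc hcong.symm)
    have hd2 : (p:ℤ)^(a+1) ∣ ((c^m : ℕ):ℤ) - ((c^n : ℕ):ℤ) := by
      refine dvd_trans (dvd_of_eq ?_) hd
      push_cast; ring
    have hcast : ((((c^m : ℕ):ℤ) - ((c^n : ℕ):ℤ) : ℤ) : ℚ) = (c:ℚ)^m - (c:ℚ)^n := by
      push_cast; ring
    rw [← hcast, hT]
    exact le_trans (kdvd_norm (a+1) _ hd2) (le_of_eq (by norm_cast))
  have hfin : ((c:ℚ)^n - 1) * (yn - ym) = (xn - xm) + ((c:ℚ)^m - (c:ℚ)^n) * ym := by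
    rw [hxn, hxm]; ring
  have hkey : padicNorm p (yn - ym) = padicNorm p (((c:ℚ)^n - 1) * (yn - ym)) := by
    rw [padicNorm.mul, h7, one_mul]
  show padicNorm p (yn - ym) ≤ T
  rw [hkey, hfin]
  refine le_trans (padicNorm.nonarchimedean (p := p)) (max_le h4 ?_)
  rw [padicNorm.mul]
  calc padicNorm p ((c:ℚ)^m - (c:ℚ)^n) * padicNorm p ym
      ≤ T * 1 := mul_le_mul h6 hym1 (padicNorm.nonneg _)
        (by rw [hT]; exact le_of_lt (kzpow_pos _))
    _ = T := by ring
end
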